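/- arXiv:math/0012125 — 5 statements merged into one kernel-verified Lean document; each statement's English description precedes it below -/
import Mathlib

section
/- Let X and Y be dense subsets of the interval [0,1], let n be a natural number, let f₁,…,fₙ be continuous complex-valued functions on [0,1], and let ψᵢ : X → ℂ and φᵢ : Y → ℂ (1 ≤ i ≤ n) be arbitrary functions. If there is a constant c ∈ ℂ such that ∑_{i=1}^n ψᵢ(x)·φᵢ(y)·(fᵢ(x) − fᵢ(y)) = c for all x ∈ X and y ∈ Y, then c = 0. -/
open scoped Matrix


/-- If `X` and `Y` are dense subsets of `[0,1]`, `f i` are continuous complex functions on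
`[0,1]`, `ψ i : X → ℂ` and `φ i : Y → ℂ` arbitrary functions, and
`∑ i, ψ i x * φ i y * (f i x - f i y) = c` for all `x ∈ X`, `y ∈ Y`, then `c = 0`. -/
theorem stmt0 (X Y : Set (Set.Icc (0:ℝ) 1)) (hX : Dense X) (hY : Dense Y)
    (n : ℕ) (f : Fin n → C(Set.Icc (0:ℝ) 1, ℂ))
    (ψ φ : Fin n → Set.Icc (0:ℝ) 1 → ℂ) (c : ℂ)
    (h : ∀ x ∈ X, ∀ y ∈ Y, ∑ i, ψ i x * φ i y * (f i x - f i y) = c) :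
    c = 0 := by
  classical
  by_contra hc
  -- the key vector-valued functions
  set G : (Set.Icc (0:ℝ) 1) → (Set.Icc (0:ℝ) 1) → (Fin n → ℂ) :=
    fun y t i => φ i y * (f i t - f i y) with hGdef
  have hGcont : ∀ y : Set.Icc (0:ℝ) 1, Continuous fun t => G y t := by
    intro y
    exact continuous_pi fun i => continuous_const.mul ((f i).continuous.sub continuous_const)
  have key : ∀ x ∈ X, ∀ y ∈ Y, ∑ j, ψ j x * G y x j = c := by
    intro x hx y hy
    rw [← h x hx y hy]
    exact Finset.sum_congr rfl fun j _ => by simp [hGdef, mul_assoc]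
  have hGdiag : ∀ y : Set.Icc (0:ℝ) 1, G y y = 0 := by
    intro y; funext i; simp [hGdef]
  -- maximal independent family
  set P : ℕ → Prop := fun k =>
    ∃ (t : Set.Icc (0:ℝ) 1) (ys : Fin k → Set.Icc (0:ℝ) 1), (∀ i, ys i ∈ Y) ∧
      LinearIndependent ℂ (fun i => G (ys i) t) with hPdef
  have hP0 : P 0 := by
    refine ⟨⟨0, Set.mem_Icc.mpr ⟨le_refl 0, zero_le_one⟩⟩, Fin.elim0, fun i => i.elim0, ?_⟩
    exact linearIndependent_empty_type
  have hPle : ∀ k, P k → k ≤ n := by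
    rintro k ⟨t, ys, -, hli⟩
    have := hli.fintype_card_le_finrank
    simpa [Module.finrank_fin_fun] using this
  set r : ℕ := Nat.findGreatest P n with hrdef
  have hPr : P r := Nat.findGreatest_spec (Nat.zero_le n) hP0
  have hmaxk : ∀ k, P k → k ≤ r := fun k hk => Nat.le_findGreatest (hPle k hk) hk
  obtain ⟨t₀, ys, hysY, hind⟩ := hPr
  -- dual functionals
  set W : Submodule ℂ (Fin n → ℂ) :=
    Submodule.span ℂ (Set.range fun i => G (ys i) t₀) with hWdef
  have hmemW : ∀ i, G (ys i) t₀ ∈ W := fun i => Submodule.subset_span ⟨i, rfl⟩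
  set B : Module.Basis (Fin r) ℂ W := Module.Basis.span hind with hBdef
  obtain ⟨q, hq⟩ := W.exists_isCompl
  set pr : (Fin n → ℂ) →ₗ[ℂ] W := W.linearProjOfIsCompl q hq with hprdef
  set w : Fin r → ((Fin n → ℂ) →ₗ[ℂ] ℂ) := fun k => (B.coord k).comp pr with hwdef
  have hw : ∀ k i, w k (G (ys i) t₀) = if i = k then 1 else 0 := by
    intro k i
    have h1 : pr (G (ys i) t₀) = ⟨G (ys i) t₀, hmemW i⟩ :=
      Submodule.linearProjOfIsCompl_apply_left hq ⟨G (ys i) t₀, hmemW i⟩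
    have h2 : (⟨G (ys i) t₀, hmemW i⟩ : W) = B i := by
      apply Subtype.ext
      exact congrArg Subtype.val (Module.Basis.span_apply hind i).symm
    simp only [hwdef, LinearMap.comp_apply, h1, h2, Module.Basis.coord_apply, Module.Basis.repr_self]
    simp [Finsupp.single_apply]
  -- the matrix A and determinant D
  set A : (Set.Icc (0:ℝ) 1) → Matrix (Fin r) (Fin r) ℂ := fun t => Matrix.of fun k i => w k (G (ys i) t)
    with hAdef
  have hAcont : Continuous A := by
    apply continuous_matrix
    intro k i
    exact (w k).continuous_of_finiteDimensional.comp (hGcont (ys i))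
  set D : (Set.Icc (0:ℝ) 1) → ℂ := fun t => (A t).det with hDdef
  have hDcont : Continuous D := hAcont.matrix_det
  have hAt₀ : A t₀ = 1 := by
    ext k i
    simp [hAdef, hw k i, Matrix.one_apply, eq_comm]
  have hDt₀ : D t₀ = 1 := by rw [hDdef]; simp [hAt₀]
  set U : Set (Set.Icc (0:ℝ) 1) := {t | D t ≠ 0} with hUdef
  have hUopen : IsOpen U := by
    have : IsClosed {t : Set.Icc (0:ℝ) 1 | D t = 0} := isClosed_eq hDcont continuous_const
    exact this.isOpen_compl
  have ht₀U : t₀ ∈ U := by simp [hUdef, hDt₀]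
  -- independence on U
  have hindepT : ∀ t, D t ≠ 0 → LinearIndependent ℂ (fun i => G (ys i) t) := by
    intro t hDt
    rw [Fintype.linearIndependent_iff]
    intro g hg
    have hk : A t *ᵥ g = 0 := by
      funext k
      have := congrArg (w k) hg
      simpa [map_sum, map_smul, smul_eq_mul, Matrix.mulVec, dotProduct, hAdef,
        mul_comm] using this
    have hginv : g = 0 := by
      have h1 : (A t)⁻¹ *ᵥ (A t *ᵥ g) = g := by
        rw [Matrix.mulVec_mulVec, Matrix.nonsing_inv_mul _ hDt.isUnit, Matrix.one_mulVec]
      rw [hk, Matrix.mulVec_zero] at h1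
      exact h1.symm
    intro i; rw [hginv]; rfl
  -- span property on U
  have hspan : ∀ t, D t ≠ 0 → ∀ y : Set.Icc (0:ℝ) 1, y ∈ Y →
      G y t ∈ Submodule.span ℂ (Set.range fun i => G (ys i) t) := by
    intro t hDt y hy
    by_contra hmem
    have hli2 : LinearIndependent ℂ (Fin.cons (G y t) (fun i => G (ys i) t) : Fin (r+1) → _) :=
      linearIndependent_fin_cons.mpr ⟨hindepT t hDt, hmem⟩
    have hfam : (fun i : Fin (r+1) => G ((Fin.cons y ys : Fin (r+1) → Set.Icc (0:ℝ) 1) i) t)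
        = Fin.cons (G y t) (fun i => G (ys i) t) := by
      funext i
      refine Fin.cases ?_ ?_ i <;> simp
    have hPr1 : P (r+1) := by
      refine ⟨t, (Fin.cons y ys : Fin (r+1) → Set.Icc (0:ℝ) 1), ?_, ?_⟩
      · intro i; refine Fin.cases ?_ ?_ i <;> simp [hy, hysY]
      · rw [hfam]; exact hli2
    have := hmaxk (r+1) hPr1
    omega
  -- pick y* in Y ∩ U
  obtain ⟨ystar, hystarY, hystarU⟩ := hY.exists_mem_open hUopen ⟨t₀, ht₀U⟩
  -- the functions m and D agree on X ∩ U
  set v : (Set.Icc (0:ℝ) 1) → (Fin r → ℂ) := fun t k => w k (G ystar t) with hvdef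
  have hvcont : Continuous v :=
    continuous_pi fun k => (w k).continuous_of_finiteDimensional.comp (hGcont ystar)
  set m : (Set.Icc (0:ℝ) 1) → ℂ := fun t => ∑ k, ((A t).adjugate *ᵥ v t) k with hmdef
  have hmcont : Continuous m := by
    apply continuous_finset_sum
    intro k _
    simp only [Matrix.mulVec, dotProduct]
    apply continuous_finset_sum
    intro i _
    exact ((hAcont.matrix_adjugate.matrix_elem k i)).mul
      ((continuous_apply i).comp hvcont)
  have hmx : ∀ x, x ∈ X → D x ≠ 0 → m x = D x := by
    intro x hxX hDx
    obtain ⟨lam, hlam⟩ := Submodule.mem_span_range_iff_exists_fun ℂ |>.mp (hspan x hDx ystar hystarY)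
    have hcsum : ∀ yy : Set.Icc (0:ℝ) 1, yy ∈ Y → ∑ j, ψ j x * G yy x j = c := key x hxX
    have hceq : c = (∑ i, lam i) * c := by
      have e1 : c = ∑ j, ψ j x * G ystar x j := (hcsum ystar hystarY).symm
      have e2 : ∑ j, ψ j x * G ystar x j = ∑ i, lam i * ∑ j, ψ j x * G (ys i) x j := by
        have hGj : ∀ j, G ystar x j = ∑ i, lam i * G (ys i) x j := by
          intro j; rw [← hlam]; simp [Finset.sum_apply]
        calc ∑ j, ψ j x * G ystar x j
            = ∑ j, ∑ i, lam i * (ψ j x * G (ys i) x j) := by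
              refine Finset.sum_congr rfl fun j _ => ?_
              rw [hGj j, Finset.mul_sum]
              exact Finset.sum_congr rfl fun i _ => by ring
          _ = ∑ i, ∑ j, lam i * (ψ j x * G (ys i) x j) := Finset.sum_comm
          _ = ∑ i, lam i * ∑ j, ψ j x * G (ys i) x j := by
              refine Finset.sum_congr rfl fun i _ => ?_
              rw [Finset.mul_sum]
      have e3 : ∑ i, lam i * ∑ j, ψ j x * G (ys i) x j = ∑ i, lam i * c := by
        apply Finset.sum_congr rfl
        intro i _
        rw [hcsum (ys i) (hysY i)]
      calc c = ∑ j, ψ j x * G ystar x j := e1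
        _ = ∑ i, lam i * ∑ j, ψ j x * G (ys i) x j := e2
        _ = ∑ i, lam i * c := e3
        _ = (∑ i, lam i) * c := (Finset.sum_mul ..).symm
    have hlam1 : ∑ i, lam i = 1 := by
      have := hceq
      rw [show c = 1 * c from (one_mul c).symm] at this
      nth_rewrite 2 [one_mul] at this
      exact mul_right_cancel₀ hc this.symm
    have hAv : A x *ᵥ lam = v x := by
      funext k
      have : w k (∑ i, lam i • G (ys i) x) = w k (G ystar x) := by rw [hlam]
      rw [map_sum] at this
      simp only [map_smul, smul_eq_mul] at this
      simpa [Matrix.mulVec, dotProduct, hAdef, hvdef, mul_comm] using this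
    have : m x = ∑ k, ((A x).adjugate *ᵥ (A x *ᵥ lam)) k := by rw [hAv]
    rw [this, Matrix.mulVec_mulVec, Matrix.adjugate_mul, Matrix.smul_mulVec,
      Matrix.one_mulVec]
    simp only [Pi.smul_apply, smul_eq_mul, ← Finset.mul_sum, hlam1, mul_one]
    rfl
  -- density argument
  have hclos : ystar ∈ closure (X ∩ U) := by
    rw [mem_closure_iff]
    intro o ho hyo
    obtain ⟨x, hxX, hxo⟩ := hX.exists_mem_open (ho.inter hUopen) ⟨ystar, hyo, hystarU⟩
    exact ⟨x, hxo.1, hxX, hxo.2⟩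
  have hEqOn : Set.EqOn m D (X ∩ U) := fun x hx => hmx x hx.1 hx.2
  have hEq : m ystar = D ystar :=
    (hEqOn.closure hmcont hDcont) hclos
  have hm0 : m ystar = 0 := by
    have : v ystar = 0 := by
      funext k
      rw [hvdef]
      simp only [hGdiag ystar, map_zero]
      rfl
    rw [hmdef]
    simp [this, Matrix.mulVec_zero]
  rw [hm0] at hEq
  exact hystarU hEq.symm
end

section
/- Let X = {aₙ} and Y = {bₙ} be two disjoint dense countable subsets of [0,1], and let α, β ∈ c₀(ℕ,ℂ) be sequences all of whose terms are non-zero. Then there do NOT exist a natural number k, continuous functions f₁,…,f_k ∈ C([0,1]), and sequences α¹,…,αᵏ, β¹,…,βᵏ ∈ c₀(ℕ,ℂ) such that αₙ·βₘ = ∑_{i=1}^k αⁱₙ·βⁱₘ·(fᵢ(aₙ) − fᵢ(bₘ)) for all n, m ∈ ℕ. -/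
set_option synthInstance.maxHeartbeats 400000
set_option maxHeartbeats 1000000

open Module Submodule
open scoped ZeroAtInfty

section
variable {r : ℕ}

lemma aux_sep {r : ℕ} (ψ : ℕ → ((Fin r → ℂ) →ₗ[ℂ] ℂ)) :
    ∀ (d : ℕ) (V : Submodule ℂ (Fin r → ℂ)), finrank ℂ V = d →
    (∀ c ∈ V, (∀ m, ψ m c = 0) → c = 0) →
    ∃ ms : Fin d → ℕ, ∀ c ∈ V, (∀ j, ψ (ms j) c = 0) → c = 0 := by
  intro d
  induction d with
  | zero =>
    intro V hV _
    refine ⟨fun _ => 0, fun c hc _ => ?_⟩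
    have : V = ⊥ := Submodule.finrank_eq_zero.mp hV
    simpa [this] using hc
  | succ d ih =>
    intro V hV hsep
    have hVne : V ≠ ⊥ := by
      intro hbot
      rw [hbot] at hV
      simp at hV
    obtain ⟨c₀, hc₀V, hc₀⟩ := Submodule.ne_bot_iff V |>.mp hVne
    obtain ⟨m₀, hm₀⟩ : ∃ m, ψ m c₀ ≠ 0 := by
      by_contra hcon
      push_neg at hcon
      exact hc₀ (hsep c₀ hc₀V hcon)
    set V' : Submodule ℂ (Fin r → ℂ) := V ⊓ LinearMap.ker (ψ m₀) with hV'
    -- finrank V' = d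
    have hfr : finrank ℂ V' = d := by
      set g : V →ₗ[ℂ] ℂ := (ψ m₀).comp V.subtype with hg
      have hrn : finrank ℂ (LinearMap.range g) + finrank ℂ (LinearMap.ker g) = finrank ℂ V :=
        LinearMap.finrank_range_add_finrank_ker g
      have hker : LinearMap.ker g = Submodule.comap V.subtype (LinearMap.ker (ψ m₀)) := by
        rw [hg, LinearMap.ker_comp]
      have hmap : (LinearMap.ker g).map V.subtype = V' := by
        rw [hker, Submodule.map_comap_subtype]
      have hkerV' : finrank ℂ (LinearMap.ker g) = finrank ℂ V' := by
        rw [← hmap]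
        exact (Submodule.equivMapOfInjective V.subtype V.injective_subtype
          (LinearMap.ker g)).finrank_eq
      have hrange : finrank ℂ (LinearMap.range g) = 1 := by
        have h1 : finrank ℂ (LinearMap.range g) ≤ 1 := by
          simpa using (LinearMap.range g).finrank_le
        have h2 : LinearMap.range g ≠ ⊥ := by
          intro hbot
          have : g ⟨c₀, hc₀V⟩ = 0 := by
            have := LinearMap.mem_range_self g ⟨c₀, hc₀V⟩
            rw [hbot] at this
            simpa using this
          exact hm₀ this
        have h3 : finrank ℂ (LinearMap.range g) ≠ 0 := by
          intro h0
          exact h2 (Submodule.finrank_eq_zero.mp h0)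
        omega
      omega
    have hsep' : ∀ c ∈ V', (∀ m, ψ m c = 0) → c = 0 := fun c hc hm =>
      hsep c hc.1 hm
    obtain ⟨ms, hms⟩ := ih V' hfr hsep'
    refine ⟨Fin.cons m₀ ms, fun c hc hj => ?_⟩
    have hcV' : c ∈ V' := ⟨hc, by simpa using hj 0⟩
    exact hms c hcV' fun j => by simpa using hj j.succ

lemma aux_cols (w : Fin r → ℕ → ℂ) (hw : LinearIndependent ℂ w) :
    ∃ ms : Fin r → ℕ, Matrix.det (Matrix.of fun p q => w p (ms q)) ≠ 0 := by
  set ψ : ℕ → ((Fin r → ℂ) →ₗ[ℂ] ℂ) := fun m => ∑ p, w p m • LinearMap.proj p with hψ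
  have hψa : ∀ m c, ψ m c = ∑ p, c p * w p m := by
    intro m c
    simp [hψ, LinearMap.sum_apply, mul_comm]
  have hind := Fintype.linearIndependent_iff.mp hw
  have htop : ∀ c ∈ (⊤ : Submodule ℂ (Fin r → ℂ)), (∀ m, ψ m c = 0) → c = 0 := by
    intro c _ hm
    have hz : ∑ p, c p • w p = 0 := by
      funext m
      simpa [Finset.sum_apply, hψa] using hm m
    funext p
    exact hind c hz p
  have hfr : finrank ℂ (⊤ : Submodule ℂ (Fin r → ℂ)) = r := by
    simp [finrank_top, Module.finrank_fintype_fun_eq_card]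
  obtain ⟨ms, hms⟩ := aux_sep ψ r ⊤ hfr htop
  refine ⟨ms, fun hdet => ?_⟩
  obtain ⟨c, hc, hcv⟩ := (Matrix.exists_vecMul_eq_zero_iff).mpr hdet
  refine hc (hms c trivial fun j => ?_)
  have := congr_fun hcv j
  simpa [Matrix.vecMul, dotProduct, hψa] using this

lemma aux_dep_det{s : ℕ} (e : Fin s → ℕ → ℂ) (c : Fin s → ℂ) (hc : c ≠ 0)
    (h : ∑ p, c p • e p = 0) (cols : Fin s → ℕ) :
    Matrix.det (Matrix.of fun p q => e p (cols q)) = 0 := by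
  rw [← Matrix.exists_vecMul_eq_zero_iff]
  refine ⟨c, hc, ?_⟩
  funext q
  have := congr_fun h (cols q)
  simpa [Matrix.vecMul, dotProduct, Finset.sum_apply] using this
end

/-- For disjoint dense sequences `{aₙ}, {bₙ} ⊆ [0,1]` and sequences `α, β ∈ c₀(ℕ, ℂ)` with all
terms nonzero, there is no finite family `fᵢ ∈ C([0,1])`, `αⁱ, βⁱ ∈ c₀` with
`αₙβₘ = ∑ᵢ αⁱₙ βⁱₘ (fᵢ(aₙ) - fᵢ(bₘ))` for all `n, m`; i.e. `α ⊗ β ∉ I(A,B)`. -/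
theorem stmt2 (a b : ℕ → Set.Icc (0:ℝ) 1) (ha : DenseRange a) (hb : DenseRange b)
    (hdisj : Disjoint (Set.range a) (Set.range b))
    (α β : C₀(ℕ, ℂ)) (hα : ∀ n, α n ≠ 0) (hβ : ∀ n, β n ≠ 0) :
    ¬ ∃ (k : ℕ) (f : Fin k → C(Set.Icc (0:ℝ) 1, ℂ)) (A B : Fin k → C₀(ℕ, ℂ)),
        ∀ n m : ℕ, α n * β m = ∑ i, A i n * B i m * (f i (a n) - f i (b m)) := by
  rintro ⟨k, f, A, B, h⟩
  set v : Set.Icc (0:ℝ) 1 → Fin k → ℕ → ℂ :=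
    fun t i m => B i m * (f i t - f i (b m)) with hv
  -- the rank function and its max
  have hρle : ∀ t, finrank ℂ (Submodule.span ℂ (Set.range (v t))) ≤ k := by
    intro t
    simpa [Set.finrank] using finrank_range_le_card (v t)
  have hbdd : BddAbove (Set.range fun t => finrank ℂ (Submodule.span ℂ (Set.range (v t)))) := by
    refine ⟨k, ?_⟩
    rintro x ⟨t, rfl⟩
    exact hρle t
  haveI hXne : Nonempty (Set.Icc (0:ℝ) 1) := ⟨⟨0, by norm_num⟩⟩
  obtain ⟨t₀, ht₀⟩ := Nat.sSup_mem
    (Set.range_nonempty fun t => finrank ℂ (Submodule.span ℂ (Set.range (v t)))) hbdd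
  set r := sSup (Set.range fun t => finrank ℂ (Submodule.span ℂ (Set.range (v t)))) with hrdef
  have hler : ∀ t, finrank ℂ (Submodule.span ℂ (Set.range (v t))) ≤ r := fun t =>
    le_csSup hbdd (Set.mem_range_self t)
  -- choose an independent subfamily of size r at t₀
  obtain ⟨s, hs_sub, hs_span, hs_ind⟩ := exists_linearIndependent ℂ (Set.range (v t₀))
  have hs_fin : s.Finite := (Set.finite_range (v t₀)).subset hs_sub
  haveI := hs_fin.fintype
  have ht₀' : finrank ℂ (Submodule.span ℂ (Set.range (v t₀))) = r := ht₀
  have hcard : Fintype.card s = r := by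
    have h1 : finrank ℂ (Submodule.span ℂ s) = s.toFinset.card := finrank_span_set_eq_card hs_ind
    rw [hs_span, ht₀', Set.toFinset_card] at h1
    exact h1.symm
  set σ := Fintype.equivFinOfCardEq hcard with hσ
  set w : Fin r → ℕ → ℂ := fun p => ((σ.symm p : s) : ℕ → ℂ) with hw
  have hw_ind : LinearIndependent ℂ w := hs_ind.comp σ.symm σ.symm.injective
  have hw_mem : ∀ p, ∃ i, v t₀ i = w p := fun p => hs_sub (σ.symm p).2
  choose J hJ using hw_mem
  obtain ⟨ms, hms⟩ := aux_cols w hw_ind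
  -- the r×r determinant function
  set g : Set.Icc (0:ℝ) 1 → ℂ :=
    fun t => Matrix.det (Matrix.of fun p q => v t (J p) (ms q)) with hg
  have hgcont : Continuous g := by
    apply Continuous.matrix_det
    apply continuous_matrix
    intro p q
    simp only [Matrix.of_apply, hv]
    exact continuous_const.mul ((map_continuous (f (J p))).sub continuous_const)
  have hg₀ : g t₀ ≠ 0 := by
    have : (Matrix.of fun p q => v t₀ (J p) (ms q)) = (Matrix.of fun p q => w p (ms q)) := by
      funext p q
      simp [hJ p]
    show (Matrix.of fun p q => v t₀ (J p) (ms q)).det ≠ 0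
    rw [this]
    exact hms
  -- find m₀ with b m₀ in the open set where g ≠ 0
  have hU : IsOpen {t : Set.Icc (0:ℝ) 1 | g t ≠ 0} := by
    have : {t : Set.Icc (0:ℝ) 1 | g t ≠ 0} = g ⁻¹' ({0}ᶜ) := rfl
    rw [this]
    exact isOpen_compl_singleton.preimage hgcont
  obtain ⟨m₀, hxU⟩ := hb.exists_mem_open hU ⟨t₀, hg₀⟩
  -- the (r+1)×(r+1) determinant function
  set rows : Set.Icc (0:ℝ) 1 → Fin (r + 1) → ℕ → ℂ :=
    fun t => Fin.cons (⇑β) (fun p => v t (J p)) with hrows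
  set cols : Fin (r + 1) → ℕ := Fin.cons m₀ ms with hcols
  set D : Set.Icc (0:ℝ) 1 → ℂ :=
    fun t => Matrix.det (Matrix.of fun p q => rows t p (cols q)) with hD
  have hDcont : Continuous D := by
    apply Continuous.matrix_det
    apply continuous_matrix
    intro p q
    induction p using Fin.cases with
    | zero => simp only [Matrix.of_apply, hrows, Fin.cons_zero]; exact continuous_const
    | succ p =>
      simp only [Matrix.of_apply, hrows, Fin.cons_succ, hv]
      exact continuous_const.mul ((map_continuous (f (J p))).sub continuous_const)
  have hDa : ∀ n, D (a n) = 0 := by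
    intro n
    have hβspan : (⇑β : ℕ → ℂ) = ∑ i, (A i n / α n) • v (a n) i := by
      funext m
      rw [Finset.sum_apply]
      simp only [Pi.smul_apply, smul_eq_mul, hv]
      have : ∀ i ∈ Finset.univ, A i n / α n * (B i m * (f i (a n) - f i (b m)))
          = (A i n * B i m * (f i (a n) - f i (b m))) / α n := by
        intro i _
        field_simp
      rw [Finset.sum_congr rfl this, ← Finset.sum_div, ← h n m,
        mul_div_cancel_left₀ _ (hα n)]
    have hmem : ∀ p : Fin (r + 1), rows (a n) p ∈ Submodule.span ℂ (Set.range (v (a n))) := by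
      intro p
      induction p using Fin.cases with
      | zero =>
        simp only [hrows, Fin.cons_zero]
        rw [hβspan]
        exact Submodule.sum_mem _ fun i _ =>
          Submodule.smul_mem _ _ (Submodule.subset_span (Set.mem_range_self i))
      | succ p =>
        simp only [hrows, Fin.cons_succ]
        exact Submodule.subset_span (Set.mem_range_self (J p))
    have hnotind : ¬ LinearIndependent ℂ (rows (a n)) := by
      intro hind
      haveI : FiniteDimensional ℂ (Submodule.span ℂ (Set.range (v (a n)))) :=
        FiniteDimensional.span_of_finite ℂ (Set.finite_range _)
      have h1 : finrank ℂ (Submodule.span ℂ (Set.range (rows (a n)))) = r + 1 := by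
        rw [finrank_span_eq_card hind]
        simp
      have h2 : Submodule.span ℂ (Set.range (rows (a n)))
          ≤ Submodule.span ℂ (Set.range (v (a n))) := by
        rw [Submodule.span_le]
        rintro x ⟨p, rfl⟩
        exact hmem p
      have h3 := Submodule.finrank_mono h2
      have h4 := hler (a n)
      rw [h1] at h3
      omega
    obtain ⟨c, hcsum, p, hcp⟩ := Fintype.not_linearIndependent_iff.mp hnotind
    have hc0 : c ≠ 0 := fun h0 => hcp (by rw [h0]; rfl)
    exact aux_dep_det _ c hc0 hcsum cols
  have hDzero : D = fun _ => (0 : ℂ) := by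
    apply ha.equalizer hDcont continuous_const
    funext n
    exact hDa n
  have hDb : D (b m₀) = β m₀ * g (b m₀) := by
    rw [hD]
    simp only []
    rw [Matrix.det_succ_column_zero, Fin.sum_univ_succ]
    have hz : ∀ p : Fin r, (Matrix.of fun p q => rows (b m₀) p (cols q)) p.succ 0 = 0 := by
      intro p
      simp [hrows, hcols, Fin.cons_succ, Fin.cons_zero, hv, sub_self]
    have hsum0 : ∑ p : Fin r, (-1 : ℂ) ^ ((p.succ : Fin (r+1)) : ℕ)
        * (Matrix.of fun p q => rows (b m₀) p (cols q)) p.succ 0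
        * Matrix.det ((Matrix.of fun p q => rows (b m₀) p (cols q)).submatrix
            (p.succ).succAbove Fin.succ) = 0 := by
      apply Finset.sum_eq_zero
      intro p _
      rw [hz p]
      ring
    rw [hsum0, add_zero]
    have hentry : (Matrix.of fun p q => rows (b m₀) p (cols q)) 0 0 = β m₀ := by
      simp [hrows, hcols]
    have hsub : (Matrix.of fun p q => rows (b m₀) p (cols q)).submatrix
        (0 : Fin (r+1)).succAbove Fin.succ = Matrix.of fun p q => v (b m₀) (J p) (ms q) := by
      funext p q
      simp [Matrix.submatrix, hrows, hcols, Fin.succAbove_zero, Fin.cons_succ]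
    rw [hentry, hsub]
    simp [hg]
  rw [congr_fun hDzero (b m₀)] at hDb
  have : β m₀ = 0 := by
    rcases mul_eq_zero.mp hDb.symm with h' | h'
    · exact h'
    · exact absurd h' hxU
  exact hβ m₀ this
end

section
/- Let A be a C*-algebra and let φ be a unital *-homomorphism from C(X) (X a compact Hausdorff space) into the center of the multiplier algebra of A. For x ∈ X let A_x be the quotient of A by the closed two-sided ideal generated by {φ(f)·a : f ∈ C(X), f(x) = 0, a ∈ A}. Then for every a ∈ A, the norm of the image a_x of a in A_x equals inf{‖(1 − φ(f) + f(x))·a‖ : f ∈ C(X)}. -/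
open MultiplierAlgebra Metric

section Aux

variable {A : Type*} [NonUnitalCStarAlgebra A]

/-- The first component of a double centralizer is automatically a right `A`-module map. -/
lemma aux_fst_mul_right (m : 𝓜(ℂ, A)) (c y : A) : m.fst (c * y) = m.fst c * y := by
  have key : ∀ z : A, (∀ w : A, w * z = 0) → z = 0 := by
    intro z h
    have h2 : ‖z‖ * ‖z‖ = 0 := by
      rw [← CStarRing.norm_star_mul_self, h (star z), norm_zero]
    exact norm_eq_zero.mp (mul_self_eq_zero.mp h2)
  have hz : m.fst (c * y) - m.fst c * y = 0 := by
    refine key _ fun w => ?_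
    rw [mul_sub, sub_eq_zero]
    calc w * m.fst (c * y) = m.snd w * (c * y) := (m.central w (c * y)).symm
      _ = m.snd w * c * y := (mul_assoc _ _ _).symm
      _ = w * m.fst c * y := by rw [m.central]
      _ = w * (m.fst c * y) := mul_assoc _ _ _
  exact sub_eq_zero.mp hz

/-- If a multiplier commutes with (the image in the multiplier algebra of) `y`, then its first
component pulls `y` out of products on the left. -/
lemma aux_fst_mul_left (m : 𝓜(ℂ, A)) (y c : A)
    (h : m * (y : 𝓜(ℂ, A)) = (y : 𝓜(ℂ, A)) * m) : m.fst (y * c) = y * m.fst c := by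
  have h1 := congrArg (fun n : 𝓜(ℂ, A) => n.fst) h
  rw [DoubleCentralizer.mul_fst, DoubleCentralizer.mul_fst] at h1
  have h2 := congrFun (congrArg DFunLike.coe h1) c
  simpa [ContinuousLinearMap.mul_apply] using h2

lemma aux_fst_norm_le (m : 𝓜(ℂ, A)) (c : A) : ‖m.fst c‖ ≤ ‖m‖ * ‖c‖ := by
  simpa [DoubleCentralizer.norm_fst] using m.fst.le_opNorm c

end Aux

/-- For a `C(X)`-algebra `A` (given by a unital *-homomorphism `φ` from `C(X)` into the
center of the multiplier algebra of `A`), the norm of the image of `a` in the fiber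
`A_x = A / cl(C_x(X)·A)` (i.e. the distance from `a` to the closed two-sided ideal generated
by `C_x(X)·A`) equals `inf { ‖(1 - φ(f) + f(x))·a‖ : f ∈ C(X) }`. -/
theorem stmt3 (X : Type*) [TopologicalSpace X] [CompactSpace X] [T2Space X]
    (A : Type*) [NonUnitalCStarAlgebra A]
    (φ : C(X, ℂ) →⋆ₐ[ℂ] 𝓜(ℂ, A))
    (hφ : ∀ (f : C(X, ℂ)) (m : 𝓜(ℂ, A)), φ f * m = m * φ f)
    (x : X) (a : A) :
    infDist a (closure (TwoSidedIdeal.span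
        {c : A | ∃ (f : C(X, ℂ)) (b : A), f x = 0 ∧ c = (φ f).fst b} : Set A))
      = ⨅ f : C(X, ℂ), ‖((1 : 𝓜(ℂ, A)) - φ f + f x • 1).fst a‖ := by
  set S : Set A := {c : A | ∃ (f : C(X, ℂ)) (b : A), f x = 0 ∧ c = (φ f).fst b} with hS
  -- the generic formula for the elements appearing on the right-hand side
  have hterm : ∀ f : C(X, ℂ),
      ((1 : 𝓜(ℂ, A)) - φ f + f x • 1).fst a = a - (φ f).fst a + f x • a := by
    intro f
    rw [DoubleCentralizer.add_fst, DoubleCentralizer.sub_fst, DoubleCentralizer.one_fst,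
      DoubleCentralizer.smul_fst, DoubleCentralizer.one_fst]
    simp
  have hbdd : BddBelow (Set.range fun f : C(X, ℂ) =>
      ‖((1 : 𝓜(ℂ, A)) - φ f + f x • 1).fst a‖) :=
    ⟨0, by rintro _ ⟨f, rfl⟩; exact norm_nonneg _⟩
  have hφnorm : ∀ g : C(X, ℂ), ‖φ g‖ ≤ ‖g‖ := fun g =>
    NonUnitalStarAlgHom.norm_apply_le φ g
  refine le_antisymm (le_ciInf fun f => ?_) ?_
  · -- easy direction
    have hmem : (φ f).fst a - f x • a ∈ S := by
      refine ⟨f - f x • 1, a, by simp, ?_⟩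
      rw [map_sub, map_smul, map_one, DoubleCentralizer.sub_fst, DoubleCentralizer.smul_fst,
        DoubleCentralizer.one_fst]
      simp
    have hmem' : (φ f).fst a - f x • a ∈
        closure (TwoSidedIdeal.span S : Set A) :=
      subset_closure (TwoSidedIdeal.subset_span hmem)
    calc infDist a (closure (TwoSidedIdeal.span S : Set A))
        ≤ dist a ((φ f).fst a - f x • a) := infDist_le_dist_of_mem hmem'
      _ = ‖((1 : 𝓜(ℂ, A)) - φ f + f x • 1).fst a‖ := by
          rw [dist_eq_norm, hterm f]; congr 1; abel
  · -- hard direction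
    -- the auxiliary two-sided ideal
    set J : TwoSidedIdeal A := TwoSidedIdeal.mk'
      {c : A | ∀ ε > (0:ℝ), ∃ g : C(X, ℂ), ‖g‖ ≤ 1 ∧ g x = 1 ∧ ‖(φ g).fst c‖ ≤ ε}
      (fun ε hε => ⟨1, (ContinuousMap.norm_le _ zero_le_one).mpr (by simp),
        by simp, by simp [hε.le]⟩)
      (by
        rintro c₁ c₂ h₁ h₂ ε hε
        obtain ⟨g₁, hg₁n, hg₁x, hg₁⟩ := h₁ (ε/2) (by positivity)
        obtain ⟨g₂, hg₂n, hg₂x, hg₂⟩ := h₂ (ε/2) (by positivity)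
        refine ⟨g₁ * g₂, le_trans (norm_mul_le _ _)
          (mul_le_one₀ hg₁n (norm_nonneg _) hg₂n), by simp [hg₁x, hg₂x], ?_⟩
        have e₁ : (φ (g₁ * g₂)).fst c₁ = (φ g₂).fst ((φ g₁).fst c₁) := by
          rw [mul_comm, map_mul, DoubleCentralizer.mul_fst]; rfl
        have e₂ : (φ (g₁ * g₂)).fst c₂ = (φ g₁).fst ((φ g₂).fst c₂) := by
          rw [map_mul, DoubleCentralizer.mul_fst]; rfl
        have b₁ : ‖(φ (g₁ * g₂)).fst c₁‖ ≤ ε/2 := by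
          rw [e₁]
          calc ‖(φ g₂).fst ((φ g₁).fst c₁)‖ ≤ ‖φ g₂‖ * ‖(φ g₁).fst c₁‖ :=
                aux_fst_norm_le _ _
            _ ≤ 1 * (ε/2) := by
                apply mul_le_mul (le_trans (hφnorm g₂) hg₂n) hg₁ (norm_nonneg _) zero_le_one
            _ = ε/2 := one_mul _
        have b₂ : ‖(φ (g₁ * g₂)).fst c₂‖ ≤ ε/2 := by
          rw [e₂]
          calc ‖(φ g₁).fst ((φ g₂).fst c₂)‖ ≤ ‖φ g₁‖ * ‖(φ g₂).fst c₂‖ :=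
                aux_fst_norm_le _ _
            _ ≤ 1 * (ε/2) := by
                apply mul_le_mul (le_trans (hφnorm g₁) hg₁n) hg₂ (norm_nonneg _) zero_le_one
            _ = ε/2 := one_mul _
        calc ‖(φ (g₁ * g₂)).fst (c₁ + c₂)‖
            = ‖(φ (g₁ * g₂)).fst c₁ + (φ (g₁ * g₂)).fst c₂‖ := by rw [map_add]
          _ ≤ ‖(φ (g₁ * g₂)).fst c₁‖ + ‖(φ (g₁ * g₂)).fst c₂‖ := norm_add_le _ _
          _ ≤ ε/2 + ε/2 := add_le_add b₁ b₂
          _ = ε := by ring)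
      (by
        rintro c h ε hε
        obtain ⟨g, hgn, hgx, hg⟩ := h ε hε
        exact ⟨g, hgn, hgx, by simpa using hg⟩)
      (by
        -- left multiplication
        rintro w c h ε hε
        obtain ⟨g, hgn, hgx, hg⟩ := h (ε/(‖w‖+1)) (by positivity)
        refine ⟨g, hgn, hgx, ?_⟩
        rw [aux_fst_mul_left (φ g) w c (hφ g _)]
        calc ‖w * (φ g).fst c‖ ≤ ‖w‖ * ‖(φ g).fst c‖ := norm_mul_le _ _
          _ ≤ (‖w‖+1) * (ε/(‖w‖+1)) := by
              apply mul_le_mul (by linarith [norm_nonneg w]) hg (norm_nonneg _)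
                (by positivity)
          _ = ε := by field_simp)
      (by
        -- right multiplication
        rintro c w h ε hε
        obtain ⟨g, hgn, hgx, hg⟩ := h (ε/(‖w‖+1)) (by positivity)
        refine ⟨g, hgn, hgx, ?_⟩
        rw [aux_fst_mul_right (φ g) c w]
        calc ‖(φ g).fst c * w‖ ≤ ‖(φ g).fst c‖ * ‖w‖ := norm_mul_le _ _
          _ ≤ (ε/(‖w‖+1)) * (‖w‖+1) := by
              apply mul_le_mul hg (by linarith [norm_nonneg w]) (norm_nonneg _)
                (by positivity)
          _ = ε := by field_simp) with hJ
    -- the generating set is contained in `J`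
    have hSJ : S ⊆ (J : Set A) := by
      rintro _ ⟨f, b, hfx, rfl⟩
      rw [hJ, TwoSidedIdeal.coe_mk']
      intro ε hε
      set δ : ℝ := ε/(‖b‖+1) with hδ
      have hδpos : 0 < δ := by positivity
      set K : Set X := {y : X | δ ≤ ‖f y‖} with hK
      have hKclosed : IsClosed K := isClosed_le continuous_const (by fun_prop)
      have hxK : x ∉ K := by simp [hK, hfx, hδpos]
      obtain ⟨g₀, hg₀K, hg₀x, hg₀01⟩ := exists_continuous_zero_one_of_isClosed hKclosed
        isClosed_singleton (Set.disjoint_singleton_right.mpr hxK)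
      set g : C(X, ℂ) := ⟨fun y => (g₀ y : ℂ), by fun_prop⟩ with hg
      have hgy : ∀ y, ‖g y‖ ≤ 1 := by
        intro y
        have := hg₀01 y
        simp only [hg, ContinuousMap.coe_mk, Complex.norm_real]
        rw [Real.norm_eq_abs, abs_le]
        exact ⟨by linarith [this.1], this.2⟩
      refine ⟨g, (ContinuousMap.norm_le _ zero_le_one).mpr hgy, ?_, ?_⟩
      · have := hg₀x (Set.mem_singleton x)
        simp only [hg, ContinuousMap.coe_mk]
        rw [show g₀ x = 1 from this]
        simp
      · have hcomp : (φ g).fst ((φ f).fst b) = (φ (g * f)).fst b := by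
          rw [map_mul, DoubleCentralizer.mul_fst]; rfl
        have hgf : ‖g * f‖ ≤ δ := by
          rw [ContinuousMap.norm_le _ hδpos.le]
          intro y
          by_cases hy : y ∈ K
          · have : g₀ y = 0 := hg₀K hy
            simp [hg, this]
            positivity
          · have h1 : ‖f y‖ < δ := by simpa [hK] using hy
            calc ‖(g * f) y‖ = ‖g y‖ * ‖f y‖ := by
                  simp [norm_mul]
              _ ≤ 1 * δ := mul_le_mul (hgy y) h1.le (norm_nonneg _) zero_le_one
              _ = δ := one_mul _
        rw [hcomp]
        calc ‖(φ (g * f)).fst b‖ ≤ ‖φ (g * f)‖ * ‖b‖ := aux_fst_norm_le _ _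
          _ ≤ δ * (‖b‖+1) := by
              apply mul_le_mul (le_trans (hφnorm _) hgf) (by linarith [norm_nonneg b])
                (norm_nonneg _) hδpos.le
          _ = ε := by rw [hδ]; field_simp
    -- every element of the span satisfies the smallness property
    have hspan : ∀ c ∈ TwoSidedIdeal.span S, ∀ ε > (0:ℝ),
        ∃ g : C(X, ℂ), ‖g‖ ≤ 1 ∧ g x = 1 ∧ ‖(φ g).fst c‖ ≤ ε := by
      intro c hc
      have := TwoSidedIdeal.mem_span_iff.mp hc J hSJ
      rw [hJ, TwoSidedIdeal.mem_mk'] at this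
      exact this
    -- the infimum is at most `‖a - c‖` for every `c` in the span
    have hkey : ∀ c ∈ TwoSidedIdeal.span S,
        (⨅ f : C(X, ℂ), ‖((1 : 𝓜(ℂ, A)) - φ f + f x • 1).fst a‖) ≤ ‖a - c‖ := by
      intro c hc
      refine le_of_forall_pos_le_add fun ε hε => ?_
      obtain ⟨g, hgn, hgx, hg⟩ := hspan c hc ε hε
      have hFx : ((1:C(X,ℂ)) - g) x = 0 := by simp [hgx]
      have hφF : (1 : 𝓜(ℂ, A)) - φ ((1:C(X,ℂ)) - g) + ((1:C(X,ℂ)) - g) x • 1 = φ g := by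
        rw [map_sub, map_one, hFx]
        simp
      calc (⨅ f : C(X, ℂ), ‖((1 : 𝓜(ℂ, A)) - φ f + f x • 1).fst a‖)
          ≤ ‖((1 : 𝓜(ℂ, A)) - φ ((1:C(X,ℂ)) - g) + ((1:C(X,ℂ)) - g) x • 1).fst a‖ :=
            ciInf_le hbdd _
        _ = ‖(φ g).fst a‖ := by rw [hφF]
        _ = ‖(φ g).fst (a - c) + (φ g).fst c‖ := by rw [← map_add]; simp
        _ ≤ ‖(φ g).fst (a - c)‖ + ‖(φ g).fst c‖ := norm_add_le _ _
        _ ≤ ‖φ g‖ * ‖a - c‖ + ε := add_le_add (aux_fst_norm_le _ _) hg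
        _ ≤ 1 * ‖a - c‖ + ε := by
            have := mul_le_mul_of_nonneg_right (le_trans (hφnorm g) hgn) (norm_nonneg (a - c))
            linarith
        _ = ‖a - c‖ + ε := by rw [one_mul]
    -- extend to the closure and conclude
    have hkey' : ∀ c ∈ closure (TwoSidedIdeal.span S : Set A),
        (⨅ f : C(X, ℂ), ‖((1 : 𝓜(ℂ, A)) - φ f + f x • 1).fst a‖) ≤ ‖a - c‖ := by
      intro c hc
      refine le_of_forall_pos_le_add fun ε hε => ?_
      obtain ⟨c', hc', hcc'⟩ := Metric.mem_closure_iff.mp hc ε hε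
      calc (⨅ f : C(X, ℂ), ‖((1 : 𝓜(ℂ, A)) - φ f + f x • 1).fst a‖)
          ≤ ‖a - c'‖ := hkey c' hc'
        _ = ‖(a - c) + (c - c')‖ := by congr 1; abel
        _ ≤ ‖a - c‖ + ‖c - c'‖ := norm_add_le _ _
        _ ≤ ‖a - c‖ + ε := by
            rw [dist_eq_norm] at hcc'; linarith
    by_contra hcon
    push_neg at hcon
    have hne : (closure (TwoSidedIdeal.span S : Set A)).Nonempty :=
      ⟨0, subset_closure (SetLike.mem_coe.mpr (zero_mem _))⟩
    obtain ⟨c, hc, hdist⟩ := (Metric.infDist_lt_iff hne).mp hcon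
    have := hkey' c hc
    rw [dist_eq_norm] at hdist
    linarith
end

section
/- Let A be a C*-algebra, h ∈ A a positive element, and a ∈ A with a*a ≤ h^{10}. Then a belongs to the closure of the right ideal a ∈ cl(A·h⁴) (equivalently, a = lim_{ε→0} a·h⁴·(h⁴+ε)⁻¹, so there is a well-defined element a' = "h^{-4}a" in the closure sense with a = a'·h⁴ whenever the functional calculus inverse exists fiberwise). -/
open scoped NNReal

set_option maxHeartbeats 1000000

/-- In a C*-algebra, if `0 ≤ h` and `a*a ≤ h^10`, then `a` lies in the closure of the
right ideal `A·h⁴`. (Powers written as iterated products since `A` need not be unital.) -/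
theorem stmt9 {A : Type*} [NonUnitalCStarAlgebra A] [PartialOrder A] [StarOrderedRing A]
    (h a : A) (hh : 0 ≤ h)
    (hle : star a * a ≤ h * h * h * h * h * h * h * h * h * h) :
    a ∈ closure {y : A | ∃ b : A, y = b * (h * h * h * h)} := by
  have hsa : IsSelfAdjoint h := .of_nonneg hh
  rw [Metric.mem_closure_iff]
  intro ε hε
  set δ : ℝ := min 1 (ε / 2) with hδdef
  have hδpos : 0 < δ := lt_min one_pos (by linarith)
  have hδ5pos : 0 < δ ^ 5 := by positivity
  set gf : ℝ → ℝ := fun t => t ^ 5 / (δ ^ 5 + t ^ 5) with hgf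
  set kf : ℝ → ℝ := fun t => t / (δ ^ 5 + t ^ 5) with hkf
  have hσ : quasispectrum ℝ h ⊆ Set.Ici (0 : ℝ) :=
    fun t ht => quasispectrum_nonneg_of_nonneg h hh t ht
  have hden : ∀ t ∈ Set.Ici (0 : ℝ), δ ^ 5 + t ^ 5 ≠ 0 := by
    intro t ht
    have ht5 : (0 : ℝ) ≤ t ^ 5 := pow_nonneg ht 5
    positivity
  have hgc : ContinuousOn gf (quasispectrum ℝ h) :=
    (ContinuousOn.div (by fun_prop) (by fun_prop) hden).mono hσ
  have hkc : ContinuousOn kf (quasispectrum ℝ h) :=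
    (ContinuousOn.div (by fun_prop) (by fun_prop) hden).mono hσ
  have hg0 : gf 0 = 0 := by simp [hgf]
  have hk0 : kf 0 = 0 := by simp [hkf]
  set G : A := cfcₙ gf h with hG
  have hGsa : star G = G := (cfcₙ_predicate gf h).star_eq
  -- the conjugation map
  set Φ : A → A := fun v => v - G * v - v * G + G * v * G with hΦ
  have hgen : ∀ s : A, Φ (star s * s) = star (s - s * G) * (s - s * G) := by
    intro s
    simp only [hΦ, star_sub, star_mul, hGsa]
    noncomm_ring
  -- abbreviations for powers as cfcₙ
  have hid : cfcₙ (fun t : ℝ => t) h = h := cfcₙ_id' ℝ h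
  have h2 : cfcₙ (fun t : ℝ => t * t) h = h * h := by
    rw [cfcₙ_mul _ _ h (by fun_prop) (by simp) (by fun_prop) (by simp), hid]
  have h4 : cfcₙ (fun t : ℝ => (t * t) * (t * t)) h = (h * h) * (h * h) := by
    rw [cfcₙ_mul _ _ h (by fun_prop) (by simp) (by fun_prop) (by simp), h2]
  have h5 : cfcₙ (fun t : ℝ => ((t * t) * (t * t)) * t) h = ((h * h) * (h * h)) * h := by
    rw [cfcₙ_mul _ _ h (by fun_prop) (by simp) (by fun_prop) (by simp), h4, hid]
  set H5 : A := ((h * h) * (h * h)) * h with hH5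
  have hH5sa : star H5 = H5 := by
    simp only [hH5, star_mul, hsa.star_eq, mul_assoc]
  -- G = (a piece of A) * h⁴
  have hGfact : G = cfcₙ kf h * ((h * h) * (h * h)) := by
    have : gf = fun t => kf t * ((t * t) * (t * t)) := by
      funext t
      simp only [hgf, hkf]
      rw [div_mul_eq_mul_div]
      ring_nf
    rw [hG, this, cfcₙ_mul _ _ h hkc hk0 (by fun_prop) (by simp), h4]
  -- the element z
  set z : A := cfcₙ (fun t => (((t * t) * (t * t)) * t) - (((t * t) * (t * t)) * t) * gf t) h
    with hz
  have hzfact : z = H5 - H5 * G := by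
    rw [hz, cfcₙ_sub (fun t : ℝ => ((t*t)*(t*t))*t) (fun t : ℝ => (((t*t)*(t*t))*t) * gf t) h (by fun_prop) (by simp)
      ((by fun_prop : ContinuousOn (fun t : ℝ => ((t*t)*(t*t))*t) (quasispectrum ℝ h)).mul hgc)
      (by simp [hg0]),
      cfcₙ_mul _ _ h (by fun_prop) (by simp) hgc hg0, h5]
  have hznorm : ‖z‖ ≤ δ ^ 5 := by
    refine norm_cfcₙ_le fun t ht => ?_
    have ht0 : 0 ≤ t := hσ ht
    have ht5 : (0 : ℝ) ≤ t ^ 5 := pow_nonneg ht0 5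
    have hdpos : 0 < δ ^ 5 + t ^ 5 := by positivity
    have : (((t * t) * (t * t)) * t) - (((t * t) * (t * t)) * t) * gf t
        = t ^ 5 * δ ^ 5 / (δ ^ 5 + t ^ 5) := by
      simp only [hgf]
      field_simp
      ring
    rw [this, Real.norm_of_nonneg (by positivity), div_le_iff₀ hdpos]
    nlinarith
  -- star x * x ≤ star z * z
  set x : A := a - a * G with hx
  have hsxx : star x * x = Φ (star a * a) := by
    simp only [hx, hΦ, star_sub, star_mul, hGsa]
    noncomm_ring
  have hΦnonneg : ∀ q, q ∈ AddSubmonoid.closure (Set.range fun s : A => star s * s) →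
      0 ≤ Φ q := by
    intro q hq
    induction hq using AddSubmonoid.closure_induction with
    | mem w hw =>
      obtain ⟨s, rfl⟩ := hw
      rw [hgen s]
      exact star_mul_self_nonneg _
    | zero => simp [hΦ]
    | add u v hu hv hΦu hΦv =>
      have : Φ (u + v) = Φ u + Φ v := by simp only [hΦ]; noncomm_ring
      rw [this]
      exact add_nonneg hΦu hΦv
  obtain ⟨p, hpmem, hpd⟩ := (StarOrderedRing.le_iff _ _).mp hle
  have hΦp : 0 ≤ Φ p := hΦnonneg p hpmem
  have hkey : star x * x ≤ star z * z := by
    have hd : h * h * h * h * h * h * h * h * h * h = star H5 * H5 := by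
      rw [hH5sa]; simp only [hH5, mul_assoc]
    have hΦd : Φ (star a * a + p) = Φ (star a * a) + Φ p := by
      simp only [hΦ]; noncomm_ring
    calc star x * x = Φ (star a * a) := hsxx
      _ ≤ Φ (star a * a) + Φ p := le_add_of_nonneg_right hΦp
      _ = Φ (star a * a + p) := hΦd.symm
      _ = Φ (star H5 * H5) := by rw [← hpd, hd]
      _ = star (H5 - H5 * G) * (H5 - H5 * G) := hgen H5
      _ = star z * z := by rw [hzfact]
  -- conclude
  refine ⟨(a * cfcₙ kf h) * ((h * h) * (h * h)), ⟨a * cfcₙ kf h, by simp [mul_assoc]⟩, ?_⟩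
  have hxy : a - (a * cfcₙ kf h) * ((h * h) * (h * h)) = x := by
    rw [hx, hGfact, mul_assoc]
  have hnx : ‖x‖ ≤ δ ^ 5 := by
    have h1 : ‖star x * x‖ ≤ ‖star z * z‖ :=
      CStarAlgebra.norm_le_norm_of_nonneg_of_le (star_mul_self_nonneg x) hkey
    rw [CStarRing.norm_star_mul_self, CStarRing.norm_star_mul_self] at h1
    have h2 : ‖x‖ ^ 2 ≤ (δ ^ 5) ^ 2 := by
      rw [sq, sq]
      exact h1.trans (mul_le_mul hznorm hznorm (norm_nonneg z) hδ5pos.le)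
    exact le_of_pow_le_pow_left₀ two_ne_zero hδ5pos.le h2
  have hδ5le : δ ^ 5 ≤ δ := by
    calc δ ^ 5 ≤ δ ^ 1 := pow_le_pow_of_le_one hδpos.le (min_le_left _ _) (by norm_num)
      _ = δ := pow_one δ
  calc dist a ((a * cfcₙ kf h) * ((h * h) * (h * h)))
      = ‖a - (a * cfcₙ kf h) * ((h * h) * (h * h))‖ := dist_eq_norm _ _
    _ = ‖x‖ := by rw [hxy]
    _ ≤ δ ^ 5 := hnx
    _ ≤ δ := hδ5le
    _ ≤ ε / 2 := min_le_right _ _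
    _ < ε := by linarith
end

section
/- Let A be a C*-algebra and K a set of pure states of A that is closed in the weak-* topology within the pure state space and invariant under the adjoint action of the unitary group (ω ↦ ω(u*·u)). Define K^⊥ = {a ∈ A : ω(a) = 0 for all ω ∈ K}. Then K^⊥ is a closed two-sided ideal of A. -/
open scoped ComplexOrder
open Complex

namespace Stmt13Aux

variable {A : Type*} [CStarAlgebra A]

lemma pos_re_im {σ : WeakDual ℂ A} (hσ : ∀ a : A, 0 ≤ σ (star a * a)) (a : A) :
    0 ≤ (σ (star a * a)).re ∧ (σ (star a * a)).im = 0 := by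
  have h := hσ a
  rw [Complex.le_def] at h
  exact ⟨by simpa using h.1, by simpa using h.2.symm⟩

lemma expand_aux (σ : WeakDual ℂ A) (a b : A) (t : ℂ) :
    σ (star (a + t • b) * (a + t • b)) =
      σ (star a * a) + t * σ (star a * b) + (starRingEnd ℂ) t * σ (star b * a)
        + ((starRingEnd ℂ) t * t) * σ (star b * b) := by
  have key : star (a + t • b) * (a + t • b) =
      star a * a + t • (star a * b) + (starRingEnd ℂ) t • (star b * a)
        + ((starRingEnd ℂ) t * t) • (star b * b) := by
    rw [star_add, star_smul]
    simp only [add_mul, mul_add, smul_mul_assoc, mul_smul_comm, smul_smul, smul_add]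
    rw [starRingEnd_apply, mul_comm (star t) t]
    abel
  rw [key, map_add, map_add, map_add, map_smul, map_smul, map_smul]
  simp [smul_eq_mul]

lemma herm {σ : WeakDual ℂ A} (hσ : ∀ a : A, 0 ≤ σ (star a * a)) (a b : A) :
    σ (star b * a) = (starRingEnd ℂ) (σ (star a * b)) := by
  have ha := (pos_re_im hσ a).2
  have hb := (pos_re_im hσ b).2
  have h1 : (σ (star a * b)).im + (σ (star b * a)).im = 0 := by
    have h := (pos_re_im hσ (a + (1:ℂ) • b)).2
    rw [expand_aux σ a b 1] at h
    simp only [map_one, one_mul, mul_one, Complex.add_im, ha, hb] at h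
    linarith
  have h2 : (σ (star a * b)).re - (σ (star b * a)).re = 0 := by
    have h := (pos_re_im hσ (a + (I:ℂ) • b)).2
    rw [expand_aux σ a b I] at h
    simp only [Complex.add_im, Complex.mul_im, Complex.conj_I, Complex.I_re, Complex.I_im,
      Complex.neg_re, Complex.neg_im, ha, hb] at h
    nlinarith [h]
  apply Complex.ext
  · simp only [Complex.conj_re]; linarith
  · simp only [Complex.conj_im]; linarith

lemma cs {σ : WeakDual ℂ A} (hσ : ∀ a : A, 0 ≤ σ (star a * a)) (a b : A) :
    ‖σ (star a * b)‖ ^ 2 ≤ (σ (star a * a)).re * (σ (star b * b)).re := by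
  by_cases hq : σ (star a * b) = 0
  · rw [hq]
    simpa using mul_nonneg (pos_re_im hσ a).1 (pos_re_im hσ b).1
  · set q := σ (star a * b) with hqdef
    set p := (σ (star a * a)).re with hpdef
    set s := (σ (star b * b)).re with hsdef
    have hp : 0 ≤ p := (pos_re_im hσ a).1
    have hs : 0 ≤ s := (pos_re_im hσ b).1
    have ha := (pos_re_im hσ a).2
    have hb := (pos_re_im hσ b).2
    set Q := ‖q‖ ^ 2 with hQdef
    have hQpos : 0 < Q := by
      have := norm_pos_iff.mpr hq
      positivity
    have hq' : q * (starRingEnd ℂ) q = (Q : ℂ) := by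
      rw [Complex.mul_conj, hQdef, Complex.sq_norm]
    have key : ∀ r : ℝ, 0 ≤ p - 2 * r * Q + r ^ 2 * Q * s := by
      intro r
      have hpos := (pos_re_im hσ (a + ((-(r:ℂ) * (starRingEnd ℂ) q)) • b)).1
      rw [expand_aux σ a b _, herm hσ a b] at hpos
      have e : σ (star a * a) + (-(r:ℂ) * (starRingEnd ℂ) q) * q
            + (starRingEnd ℂ) (-(r:ℂ) * (starRingEnd ℂ) q) * (starRingEnd ℂ) q
            + ((starRingEnd ℂ) (-(r:ℂ) * (starRingEnd ℂ) q) * (-(r:ℂ) * (starRingEnd ℂ) q))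
              * σ (star b * b)
          = σ (star a * a) - ((2 * r * Q : ℝ) : ℂ)
            + ((r ^ 2 * Q : ℝ) : ℂ) * σ (star b * b) := by
        have hconj : (starRingEnd ℂ) (-(r:ℂ) * (starRingEnd ℂ) q) = -(r:ℂ) * q := by
          simp [map_mul, Complex.conj_conj, Complex.conj_ofReal]
        rw [hconj]
        push_cast
        linear_combination ((r:ℂ)^2 * σ (star b * b) - 2*(r:ℂ)) * hq'
      rw [e] at hpos
      simp only [Complex.add_re, Complex.sub_re, Complex.ofReal_re, Complex.mul_re,
        Complex.ofReal_im, hb] at hpos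
      rw [← hpdef] at hpos
      rw [← hsdef] at hpos
      linarith
    rcases eq_or_lt_of_le hs with hs0 | hs0
    · exfalso
      have hk := key ((p + 1) / (2 * Q))
      rw [← hs0] at hk
      have h2 : 2 * ((p + 1) / (2 * Q)) * Q = p + 1 := by
        field_simp
      nlinarith [hk]
    · have hk := key (1 / s)
      have e1 : p - 2 * (1/s) * Q + (1/s) ^ 2 * Q * s = p - Q / s := by
        field_simp
        ring
      rw [e1] at hk
      have : Q / s ≤ p := by linarith
      rw [div_le_iff₀ hs0] at this
      exact this

lemma state_re_le_norm {σ : WeakDual ℂ A} (hσ : ∀ a : A, 0 ≤ σ (star a * a)) (hone : σ 1 = 1)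
    (z : A) : (σ (star z * z)).re ≤ ‖star z * z‖ := by
  letI := CStarAlgebra.spectralOrder A
  haveI := CStarAlgebra.spectralOrderedRing A
  set w := star z * z with hw
  have hwnn : 0 ≤ w := star_mul_self_nonneg z
  have hsa : IsSelfAdjoint w := hwnn.isSelfAdjoint
  have hle : w ≤ algebraMap ℝ A ‖w‖ := hsa.le_algebraMap_norm_self
  have hy : (0:A) ≤ algebraMap ℝ A ‖w‖ - w := sub_nonneg.mpr hle
  have h1 : CFC.sqrt (algebraMap ℝ A ‖w‖ - w) * CFC.sqrt (algebraMap ℝ A ‖w‖ - w)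
      = algebraMap ℝ A ‖w‖ - w := CFC.sqrt_mul_sqrt_self _ hy
  have hsa2 : IsSelfAdjoint (CFC.sqrt (algebraMap ℝ A ‖w‖ - w)) :=
    (CFC.sqrt_nonneg (a := algebraMap ℝ A ‖w‖ - w)).isSelfAdjoint
  have h2 : 0 ≤ σ (algebraMap ℝ A ‖w‖ - w) := by
    have := hσ (CFC.sqrt (algebraMap ℝ A ‖w‖ - w))
    rwa [hsa2.star_eq, h1] at this
  have h3 : σ (algebraMap ℝ A ‖w‖) = (‖w‖ : ℂ) := by
    have e : algebraMap ℝ A ‖w‖ = (‖w‖ : ℂ) • (1 : A) := by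
      rw [Algebra.algebraMap_eq_smul_one, ← IsScalarTower.algebraMap_smul ℂ (‖w‖) (1 : A)]
      norm_num
    rw [e, map_smul, hone, smul_eq_mul, mul_one]
  rw [map_sub, h3, Complex.le_def] at h2
  have := h2.1
  simp only [Complex.zero_re, Complex.sub_re, Complex.ofReal_re] at this
  linarith

lemma state_abs_le_norm {σ : WeakDual ℂ A} (hσ : ∀ a : A, 0 ≤ σ (star a * a)) (hone : σ 1 = 1)
    (z : A) : ‖σ z‖ ≤ ‖z‖ := by
  have h := cs hσ 1 z
  simp only [star_one, one_mul, hone, Complex.one_re] at h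
  have h2 : (σ (star z * z)).re ≤ ‖star z * z‖ := state_re_le_norm hσ hone z
  have h3 : ‖star z * z‖ = ‖z‖ * ‖z‖ := CStarRing.norm_star_mul_self
  nlinarith [norm_nonneg (σ z), norm_nonneg z]

lemma central_pow (σ : WeakDual ℂ A) {c : A} (hc : ∀ b : A, σ (c * b) = σ (b * c)) :
    ∀ k : ℕ, ∀ b : A, σ (c ^ k * b) = σ (b * c ^ k) := by
  intro k
  induction k with
  | zero => simp
  | succ n ih =>
    intro b
    calc σ (c ^ (n+1) * b) = σ (c * (c ^ n * b)) := by rw [pow_succ', mul_assoc]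
    _ = σ ((c ^ n * b) * c) := hc _
    _ = σ (c ^ n * (b * c)) := by rw [mul_assoc]
    _ = σ ((b * c) * c ^ n) := ih _
    _ = σ (b * c ^ (n+1)) := by rw [pow_succ', ← mul_assoc]

/-- Key domination estimate: for a state `σ`, a self-adjoint element `c` centralizing `σ`,
`σ(a* a c²) ≤ ‖c‖² σ(a* a)`. -/
lemma domination {σ : WeakDual ℂ A} (hσ : ∀ a : A, 0 ≤ σ (star a * a)) (hone : σ 1 = 1)
    {c : A} (hcsa : IsSelfAdjoint c) (hc : ∀ b : A, σ (c * b) = σ (b * c)) (a : A) :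
    (σ (star a * a * c ^ 2)).re ≤ ‖c‖ ^ 2 * (σ (star a * a)).re := by
  set d := star a * a with hd
  set F : ℕ → ℝ := fun k => (σ (d * c ^ (2*k))).re with hF
  -- F k as a positive quantity
  have hFval : ∀ k : ℕ, σ (d * c ^ (2*k)) = σ (star (a * c ^ k) * (a * c ^ k)) := by
    intro k
    have hsak : IsSelfAdjoint (c ^ k) := hcsa.pow k
    have e1 : star (a * c ^ k) * (a * c ^ k) = c ^ k * (d * c ^ k) := by
      rw [star_mul, hsak.star_eq, hd]
      noncomm_ring
    have h2k : 2 * k = k + k := two_mul k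
    rw [e1, central_pow σ hc k (d * c ^ k)]
    conv_rhs => rw [mul_assoc, ← pow_add]
    rw [h2k]
  have hFnonneg : ∀ k, 0 ≤ F k := by
    intro k
    rw [hF]
    simp only []
    rw [hFval k]
    exact (pos_re_im hσ _).1
  have hFim : ∀ k, (σ (d * c ^ (2*k))).im = 0 := by
    intro k
    rw [hFval k]
    exact (pos_re_im hσ _).2
  have hFsq : ∀ k, F k ^ 2 ≤ F 0 * F (2*k) := by
    intro k
    have h := cs hσ a (a * c ^ (2*k))
    have e1 : star a * (a * c ^ (2*k)) = d * c ^ (2*k) := by rw [hd, mul_assoc]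
    have e2 : (σ (star (a * c ^ (2*k)) * (a * c ^ (2*k)))).re = F (2*k) := by
      rw [← hFval (2*k)]
    have e3 : (σ (star a * a)).re = F 0 := by
      rw [hF]; simp [hd]
    rw [e1, e2, e3] at h
    have h4 : F k ^ 2 ≤ ‖σ (d * c ^ (2*k))‖ ^ 2 := by
      have h5 := Complex.abs_re_le_norm (σ (d * c ^ (2*k)))
      calc F k ^ 2 = |(σ (d * c ^ (2*k))).re| ^ 2 := (_root_.sq_abs _).symm
      _ ≤ ‖σ (d * c ^ (2*k))‖ ^ 2 :=
        pow_le_pow_left₀ (abs_nonneg _) h5 2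
    linarith
  have hFbound : ∀ k, F k ≤ ‖d‖ * ‖c‖ ^ (2*k) := by
    intro k
    have h1 : F k ≤ ‖σ (d * c ^ (2*k))‖ := Complex.re_le_norm _
    have h2 : ‖σ (d * c ^ (2*k))‖ ≤ ‖d * c ^ (2*k)‖ :=
      state_abs_le_norm hσ hone _
    rcases Nat.eq_zero_or_pos k with rfl | hk
    · have e : d * c ^ (2*0) = d := by norm_num
      rw [e] at h1 h2
      simpa using le_trans h1 h2
    · have h3 : ‖d * c ^ (2*k)‖ ≤ ‖d‖ * ‖c‖ ^ (2*k) :=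
        le_trans (norm_mul_le _ _) (by
          gcongr
          exact norm_pow_le' c (by omega))
      linarith
  have hind : ∀ n : ℕ, F 1 ^ (2 ^ n) ≤ F 0 ^ (2 ^ n - 1) * F (2 ^ n) := by
    intro n
    induction n with
    | zero => simp
    | succ m ih =>
      have h2m : 1 ≤ 2 ^ m := Nat.one_le_two_pow
      have e1 : F 1 ^ (2 ^ (m+1)) = (F 1 ^ (2 ^ m)) ^ 2 := by
        rw [pow_succ, ← pow_mul]
      have step1 : (F 1 ^ (2 ^ m)) ^ 2 ≤ (F 0 ^ (2 ^ m - 1) * F (2 ^ m)) ^ 2 := by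
        apply pow_le_pow_left₀ (pow_nonneg (hFnonneg 1) _) ih
      have step2 : (F 0 ^ (2 ^ m - 1) * F (2 ^ m)) ^ 2
          = F 0 ^ (2 * (2 ^ m - 1)) * F (2 ^ m) ^ 2 := by
        rw [mul_pow, ← pow_mul]
        ring_nf
      have step3 : F 0 ^ (2 * (2 ^ m - 1)) * F (2 ^ m) ^ 2
          ≤ F 0 ^ (2 * (2 ^ m - 1)) * (F 0 * F (2 ^ (m+1))) := by
        apply mul_le_mul_of_nonneg_left _ (pow_nonneg (hFnonneg 0) _)
        have := hFsq (2 ^ m)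
        have e : 2 * 2 ^ m = 2 ^ (m+1) := by rw [pow_succ]; ring
        rwa [e] at this
      have step4 : F 0 ^ (2 * (2 ^ m - 1)) * (F 0 * F (2 ^ (m+1)))
          = F 0 ^ (2 ^ (m+1) - 1) * F (2 ^ (m+1)) := by
        rw [← mul_assoc, ← pow_succ]
        congr 2
        have : 2 ^ (m+1) = 2 * 2 ^ m := by rw [pow_succ]; ring
        omega
      calc F 1 ^ (2 ^ (m+1)) = (F 1 ^ (2 ^ m)) ^ 2 := e1
      _ ≤ (F 0 ^ (2 ^ m - 1) * F (2 ^ m)) ^ 2 := step1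
      _ = F 0 ^ (2 * (2 ^ m - 1)) * F (2 ^ m) ^ 2 := step2
      _ ≤ F 0 ^ (2 * (2 ^ m - 1)) * (F 0 * F (2 ^ (m+1))) := step3
      _ = F 0 ^ (2 ^ (m+1) - 1) * F (2 ^ (m+1)) := step4
  -- Conclusion
  have hgoal : F 1 ≤ ‖c‖ ^ 2 * F 0 := by
    by_contra hcon
    push_neg at hcon
    have hF1pos : 0 < F 1 :=
      lt_of_le_of_lt (mul_nonneg (pow_nonneg (norm_nonneg c) 2) (hFnonneg 0)) hcon
    have hF0pos : 0 < F 0 := by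
      rcases (hFnonneg 0).lt_or_eq with h | h
      · exact h
      · exfalso
        have := hFsq 1
        rw [← h] at this
        nlinarith [hF1pos]
    have hcpos : 0 < ‖c‖ := by
      rcases (norm_nonneg c).lt_or_eq with h | h
      · exact h
      · exfalso
        have hc0 : c = 0 := norm_eq_zero.mp h.symm
        have : F 1 = 0 := by
          rw [hF]
          simp only []
          rw [hc0]
          norm_num
        linarith
    set β := ‖c‖ ^ 2 * F 0 with hβ
    have hβpos : 0 < β := by positivity
    set ρ := F 1 / β with hρdef
    have hρ : 1 < ρ := (one_lt_div hβpos).mpr hcon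
    obtain ⟨n, hn⟩ : ∃ n : ℕ, ‖d‖ / F 0 < ρ ^ n :=
      ((tendsto_pow_atTop_atTop_of_one_lt hρ).eventually_gt_atTop (‖d‖ / F 0)).exists
    have hmain : F 1 ^ (2 ^ n) * F 0 ≤ ‖d‖ * β ^ (2 ^ n) := by
      have h1 := hind n
      have h2 := hFbound (2 ^ n)
      have h3 : F 1 ^ (2 ^ n) ≤ F 0 ^ (2 ^ n - 1) * (‖d‖ * ‖c‖ ^ (2 * 2 ^ n)) :=
        le_trans h1 (mul_le_mul_of_nonneg_left h2 (pow_nonneg (hFnonneg 0) _))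
      have h4 : F 1 ^ (2 ^ n) * F 0 ≤ F 0 ^ (2 ^ n - 1) * (‖d‖ * ‖c‖ ^ (2 * 2 ^ n)) * F 0 :=
        mul_le_mul_of_nonneg_right h3 (hFnonneg 0)
      have h2n : 1 ≤ 2 ^ n := Nat.one_le_two_pow
      have hF0e : F 0 ^ (2 ^ n - 1) * F 0 = F 0 ^ (2 ^ n) := by
        rw [← pow_succ]
        congr 1
        omega
      have h5 : F 0 ^ (2 ^ n - 1) * (‖d‖ * ‖c‖ ^ (2 * 2 ^ n)) * F 0
          = ‖d‖ * β ^ (2 ^ n) := by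
        calc F 0 ^ (2 ^ n - 1) * (‖d‖ * ‖c‖ ^ (2 * 2 ^ n)) * F 0
            = ‖d‖ * (‖c‖ ^ (2 * 2 ^ n) * (F 0 ^ (2 ^ n - 1) * F 0)) := by ring
        _ = ‖d‖ * (‖c‖ ^ (2 * 2 ^ n) * F 0 ^ (2 ^ n)) := by rw [hF0e]
        _ = ‖d‖ * β ^ (2 ^ n) := by rw [hβ, mul_pow, ← pow_mul]
      linarith
    have hρ2n : ρ ^ n ≤ ρ ^ (2 ^ n) :=
      pow_le_pow_right₀ hρ.le (Nat.le_of_lt Nat.lt_two_pow_self)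
    have hlt : ‖d‖ / F 0 < ρ ^ (2 ^ n) := lt_of_lt_of_le hn hρ2n
    rw [hρdef, div_pow, div_lt_div_iff₀ hF0pos (pow_pos hβpos _)] at hlt
    linarith
  have e0 : F 0 = (σ (star a * a)).re := by norm_num [hF, hd]
  have e1 : F 1 = (σ (star a * a * c ^ 2)).re := by norm_num [hF, hd]
  rw [← e0, ← e1]
  exact hgoal

set_option maxHeartbeats 1000000 in
lemma purity {ω : WeakDual ℂ A}
    (hω : ω ∈ Set.extremePoints ℝ
      {σ : WeakDual ℂ A | (∀ a : A, 0 ≤ σ (star a * a)) ∧ σ 1 = 1})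
    (ψ : WeakDual ℂ A) (hψ : ∀ a : A, 0 ≤ ψ (star a * a))
    {C : ℝ} (hC : 0 < C)
    (hdom : ∀ a : A, (ψ (star a * a)).re ≤ C * (ω (star a * a)).re) :
    ∀ y : A, ψ y = ψ 1 * ω y := by
  obtain ⟨⟨hωpos, hω1⟩, hext⟩ := hω
  have e11 : star (1:A) * 1 = 1 := by simp
  have hψpos1 := hψ 1
  rw [e11, Complex.le_def] at hψpos1
  set t := (ψ 1).re with ht
  have htnn : 0 ≤ t := by simpa using hψpos1.1
  have hψ1 : ψ 1 = (t : ℂ) := by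
    apply Complex.ext
    · simp [ht]
    · have h2 := hψpos1.2
      simp only [Complex.zero_im] at h2
      simp [← h2]
  have htC : t ≤ C := by
    have h := hdom 1
    rw [e11, hω1] at h
    simpa using h
  rcases htnn.lt_or_eq with htpos | ht0
  swap
  · -- t = 0, so ψ = 0
    intro y
    have hcs := cs (σ := ψ) hψ 1 y
    simp only [star_one, one_mul] at hcs
    rw [← ht, ← ht0] at hcs
    simp only [zero_mul] at hcs
    have habs : ‖ψ y‖ = 0 := by
      nlinarith [norm_nonneg (ψ y)]
    have hzero : ψ y = 0 := by
      rwa [norm_eq_zero] at habs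
    rw [hzero, hψ1, ← ht0]
    simp
  · set χ : WeakDual ℂ A := (C : ℂ) • ω - ψ with hχ
    have hχapp : ∀ y : A, χ y = (C : ℂ) * ω y - ψ y := fun y => rfl
    have hχpos : ∀ a : A, 0 ≤ χ (star a * a) := by
      intro a
      rw [hχapp, Complex.le_def]
      have h1 := pos_re_im (σ := ω) hωpos a
      have h2 := pos_re_im (σ := ψ) hψ a
      have h3 := hdom a
      constructor
      · simp only [Complex.zero_re, Complex.sub_re, Complex.mul_re, Complex.ofReal_re,
          Complex.ofReal_im, h1.2]
        nlinarith
      · simp only [Complex.zero_im, Complex.sub_im, Complex.mul_im, Complex.ofReal_re,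
          Complex.ofReal_im, h1.2, h2.2]
        ring
    have hχ1 : χ 1 = ((C - t : ℝ) : ℂ) := by
      rw [hχapp, hω1, hψ1]
      push_cast
      ring
    rcases htC.lt_or_eq with htltC | hteqC
    · -- 0 < t < C : extreme point argument
      have hσ₁S : ((t⁻¹ : ℝ) • ψ : WeakDual ℂ A) ∈
          {σ : WeakDual ℂ A | (∀ a : A, 0 ≤ σ (star a * a)) ∧ σ 1 = 1} := by
        constructor
        · intro a
          have happ : ((t⁻¹ : ℝ) • ψ : WeakDual ℂ A) (star a * a)
              = ((t⁻¹ : ℝ) : ℂ) * ψ (star a * a) := by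
            rw [show ((t⁻¹ : ℝ) • ψ : WeakDual ℂ A) (star a * a)
              = (t⁻¹ : ℝ) • (ψ (star a * a)) from rfl, Complex.real_smul]
          rw [happ]
          apply mul_nonneg _ (hψ a)
          rw [Complex.le_def]
          constructor
          · simp
            positivity
          · simp
        · rw [show ((t⁻¹ : ℝ) • ψ : WeakDual ℂ A) 1 = (t⁻¹ : ℝ) • (ψ 1) from rfl,
            Complex.real_smul, hψ1]
          norm_cast
          exact inv_mul_cancel₀ (ne_of_gt htpos)
      have hσ₂S : (((C - t)⁻¹ : ℝ) • χ : WeakDual ℂ A) ∈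
          {σ : WeakDual ℂ A | (∀ a : A, 0 ≤ σ (star a * a)) ∧ σ 1 = 1} := by
        constructor
        · intro a
          have happ : (((C - t)⁻¹ : ℝ) • χ : WeakDual ℂ A) (star a * a)
              = (((C - t)⁻¹ : ℝ) : ℂ) * χ (star a * a) := by
            rw [show (((C - t)⁻¹ : ℝ) • χ : WeakDual ℂ A) (star a * a)
              = ((C - t)⁻¹ : ℝ) • (χ (star a * a)) from rfl, Complex.real_smul]
          rw [happ]
          apply mul_nonneg _ (hχpos a)
          rw [Complex.le_def]
          constructor
          · simp only [Complex.zero_re, Complex.ofReal_re]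
            have : 0 < C - t := by linarith
            positivity
          · simp
        · rw [show (((C - t)⁻¹ : ℝ) • χ : WeakDual ℂ A) 1 = ((C - t)⁻¹ : ℝ) • (χ 1) from rfl,
            Complex.real_smul, hχ1]
          have hne : C - t ≠ 0 := by intro h; linarith
          norm_cast
          exact inv_mul_cancel₀ hne
      have hseg : ω ∈ openSegment ℝ ((t⁻¹ : ℝ) • ψ : WeakDual ℂ A)
          (((C - t)⁻¹ : ℝ) • χ : WeakDual ℂ A) := by
        refine ⟨t / C, (C - t) / C, by positivity, ?_, ?_, ?_⟩
        · have : 0 < C - t := by linarith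
          positivity
        · field_simp; ring
        · apply DFunLike.ext
          intro z
          have happ : ((t / C : ℝ) • ((t⁻¹ : ℝ) • ψ : WeakDual ℂ A)
                + ((C - t) / C : ℝ) • (((C - t)⁻¹ : ℝ) • χ : WeakDual ℂ A)) z
              = ((t / C : ℝ) * (t⁻¹ : ℝ)) • ψ z
                + (((C - t) / C : ℝ) * ((C - t)⁻¹ : ℝ)) • (χ z) := by
            rw [show ((t / C : ℝ) • ((t⁻¹ : ℝ) • ψ : WeakDual ℂ A)
                + ((C - t) / C : ℝ) • (((C - t)⁻¹ : ℝ) • χ : WeakDual ℂ A)) z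
              = (t / C : ℝ) • ((t⁻¹ : ℝ) • (ψ z))
                + ((C - t) / C : ℝ) • (((C - t)⁻¹ : ℝ) • (χ z)) from rfl]
            rw [smul_smul, smul_smul]
          rw [happ, hχapp]
          have ht' : t ≠ 0 := ne_of_gt htpos
          have hCt' : C - t ≠ 0 := by intro h; linarith
          have e1 : (t / C : ℝ) * (t⁻¹ : ℝ) = C⁻¹ := by field_simp
          have e2 : ((C - t) / C : ℝ) * ((C - t)⁻¹ : ℝ) = C⁻¹ := by field_simp
          rw [e1, e2, Complex.real_smul, Complex.real_smul]
          have hC' : (C : ℂ) ≠ 0 := by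
            simp only [ne_eq, Complex.ofReal_eq_zero]
            exact ne_of_gt hC
          push_cast
          field_simp
          ring
      have heq := hext hσ₁S hσ₂S hseg
      intro y
      have happy : ((t⁻¹ : ℝ) • ψ : WeakDual ℂ A) y = ω y := by rw [heq]
      rw [show ((t⁻¹ : ℝ) • ψ : WeakDual ℂ A) y = (t⁻¹ : ℝ) • (ψ y) from rfl,
        Complex.real_smul] at happy
      rw [hψ1]
      have ht' : (t : ℂ) ≠ 0 := by
        simp only [ne_eq, Complex.ofReal_eq_zero]
        exact ne_of_gt htpos
      field_simp at happy
      rw [← happy]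
      push_cast
      field_simp
    · -- t = C : ψ = C • ω
      intro y
      have hχ1' : χ 1 = 0 := by rw [hχ1, hteqC]; simp
      have hcs := cs (σ := χ) hχpos 1 y
      simp only [star_one, one_mul] at hcs
      rw [hχ1'] at hcs
      simp only [Complex.zero_re, zero_mul] at hcs
      have habs : ‖χ y‖ = 0 := by
        nlinarith [norm_nonneg (χ y)]
      have hzero : χ y = 0 := by rwa [norm_eq_zero] at habs
      rw [hχapp] at hzero
      have : ψ y = (C : ℂ) * ω y := by linear_combination -hzero
      rw [this, hψ1, hteqC]

/-- The continuous linear map `a ↦ l * a * r`. -/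
noncomputable def sandwich (l r : A) : A →L[ℂ] A :=
  LinearMap.mkContinuous
    { toFun := fun a => l * a * r
      map_add' := fun x y => by simp [mul_add, add_mul]
      map_smul' := fun c x => by simp [mul_smul_comm, smul_mul_assoc] }
    (‖l‖ * ‖r‖)
    (fun x => by
      calc ‖l * x * r‖ ≤ ‖l * x‖ * ‖r‖ := norm_mul_le _ _
      _ ≤ ‖l‖ * ‖x‖ * ‖r‖ := by gcongr; exact norm_mul_le _ _
      _ = ‖l‖ * ‖r‖ * ‖x‖ := by ring)

@[simp] lemma sandwich_apply (l r a : A) : sandwich l r a = l * a * r := rfl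

lemma conj_zero
    {K : Set (WeakDual ℂ A)}
    (hKinv : ∀ ω ∈ K, ∀ u ∈ unitary A, ∀ ω' : WeakDual ℂ A,
      (∀ a : A, ω' a = ω (star u * a * u)) → ω' ∈ K)
    {x : A} (hx : ∀ ϖ ∈ K, ϖ x = 0)
    {ω : WeakDual ℂ A} (hω : ω ∈ K) {u : A} (hu : u ∈ unitary A) :
    ω (star u * x * u) = 0 := by
  classical
  set ω' : WeakDual ℂ A :=
    ContinuousLinearMap.comp (show A →L[ℂ] ℂ from ω) (sandwich (star u) u) with hω'
  have happ : ∀ a : A, ω' a = ω (star u * a * u) := fun a => rfl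
  have hmem : ω' ∈ K := hKinv ω hω u hu ω' happ
  have := hx ω' hmem
  rwa [happ x] at this

set_option maxHeartbeats 1000000 in
lemma centrality_sa
    {K : Set (WeakDual ℂ A)}
    (hKinv : ∀ ω ∈ K, ∀ u ∈ unitary A, ∀ ω' : WeakDual ℂ A,
      (∀ a : A, ω' a = ω (star u * a * u)) → ω' ∈ K)
    {x : A} (hx : ∀ ϖ ∈ K, ϖ x = 0)
    {ω : WeakDual ℂ A} (hω : ω ∈ K) {b : A} (hb : IsSelfAdjoint b) :
    ω (x * b) = ω (b * x) := by
  set m : A := Complex.I • b with hm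
  have hmstar : star m = -m := by
    rw [hm, star_smul, hb.star_eq]
    simp [Complex.conj_I]
  -- unitarity of exp(t • m) for real t
  have hstar_exp : ∀ t : ℝ, star (NormedSpace.exp ((t:ℂ) • m))
      = NormedSpace.exp ((t:ℂ) • (-m)) := by
    intro t
    rw [NormedSpace.star_exp, star_smul, hmstar]
    congr 1
    simp [Complex.conj_ofReal]
  have hunit : ∀ t : ℝ, NormedSpace.exp ((t:ℂ) • m) ∈ unitary A := by
    intro t
    rw [Unitary.mem_iff]
    have hcomm : Commute ((t:ℂ) • (-m)) ((t:ℂ) • m) := by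
      have : (t:ℂ) • (-m) = -((t:ℂ) • m) := by rw [smul_neg]
      rw [this]
      exact (Commute.refl _).neg_left
    letI : NormedAlgebra ℚ A := NormedAlgebra.restrictScalars ℚ ℂ A
    constructor
    · rw [hstar_exp t, ← NormedSpace.exp_add_of_commute hcomm]
      simp
    · rw [hstar_exp t, ← NormedSpace.exp_add_of_commute hcomm.symm]
      simp
  have hzero : ∀ t : ℝ, ω (NormedSpace.exp ((t:ℂ) • (-m)) * x * NormedSpace.exp ((t:ℂ) • m))
      = 0 := by
    intro t
    have h := conj_zero hKinv hx hω (hunit t)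
    rwa [hstar_exp t] at h
  -- differentiate at 0
  have hE : HasDerivAt (fun z : ℂ => NormedSpace.exp (z • m))
      (NormedSpace.exp ((0:ℂ) • m) * m) 0 := hasDerivAt_exp_smul_const m 0
  have hE' : HasDerivAt (fun z : ℂ => NormedSpace.exp (z • (-m)))
      (NormedSpace.exp ((0:ℂ) • (-m)) * (-m)) 0 := hasDerivAt_exp_smul_const (-m) 0
  have h1 : HasDerivAt (fun z : ℂ => NormedSpace.exp (z • (-m)) * x)
      (NormedSpace.exp ((0:ℂ) • (-m)) * (-m) * x) 0 := hE'.mul_const x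
  have h2 : HasDerivAt
      (fun z : ℂ => NormedSpace.exp (z • (-m)) * x * NormedSpace.exp (z • m))
      (NormedSpace.exp ((0:ℂ) • (-m)) * (-m) * x * NormedSpace.exp ((0:ℂ) • m)
        + NormedSpace.exp ((0:ℂ) • (-m)) * x * (NormedSpace.exp ((0:ℂ) • m) * m)) 0 :=
    h1.mul hE
  have h3 : HasDerivAt
      (fun z : ℂ => ω (NormedSpace.exp (z • (-m)) * x * NormedSpace.exp (z • m)))
      (ω (NormedSpace.exp ((0:ℂ) • (-m)) * (-m) * x * NormedSpace.exp ((0:ℂ) • m)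
        + NormedSpace.exp ((0:ℂ) • (-m)) * x * (NormedSpace.exp ((0:ℂ) • m) * m))) 0 :=
    (ContinuousLinearMap.hasFDerivAt (show A →L[ℂ] ℂ from ω)).comp_hasDerivAt 0 h2
  have h3' : HasDerivAt
      (fun z : ℂ => ω (NormedSpace.exp (z • (-m)) * x * NormedSpace.exp (z • m)))
      (ω (NormedSpace.exp ((0:ℂ) • (-m)) * (-m) * x * NormedSpace.exp ((0:ℂ) • m)
        + NormedSpace.exp ((0:ℂ) • (-m)) * x * (NormedSpace.exp ((0:ℂ) • m) * m)))
      ((0:ℝ) : ℂ) := by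
    rw [Complex.ofReal_zero]
    exact h3
  have h4 := h3'.comp_ofReal
  have hfun : (fun t : ℝ =>
      ω (NormedSpace.exp ((t:ℂ) • (-m)) * x * NormedSpace.exp ((t:ℂ) • m)))
      = fun _ : ℝ => (0:ℂ) := funext hzero
  rw [hfun] at h4
  have hD := h4.unique (hasDerivAt_const 0 0)
  -- hD : ω (...) = 0
  simp only [zero_smul, NormedSpace.exp_zero, one_mul, mul_one, neg_mul] at hD
  rw [map_add, map_neg] at hD
  have hmx : ω (x * m) = ω (m * x) := by
    have := sub_eq_zero.mpr (rfl : ω (m * x) = ω (m * x))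
    linear_combination hD
  rw [hm, mul_smul_comm, smul_mul_assoc, map_smul, map_smul] at hmx
  have hI : (Complex.I : ℂ) ≠ 0 := Complex.I_ne_zero
  exact smul_right_injective ℂ hI hmx

lemma centrality
    {K : Set (WeakDual ℂ A)}
    (hKinv : ∀ ω ∈ K, ∀ u ∈ unitary A, ∀ ω' : WeakDual ℂ A,
      (∀ a : A, ω' a = ω (star u * a * u)) → ω' ∈ K)
    {x : A} (hx : ∀ ϖ ∈ K, ϖ x = 0)
    {ω : WeakDual ℂ A} (hω : ω ∈ K) (b : A) :
    ω (x * b) = ω (b * x) := by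
  set P : A := b + star b with hP
  set Q : A := Complex.I • (star b - b) with hQ
  have hPsa : IsSelfAdjoint P := by
    rw [hP, IsSelfAdjoint, star_add, star_star, add_comm]
  have hQsa : IsSelfAdjoint Q := by
    rw [hQ, IsSelfAdjoint, star_smul, star_sub, star_star]
    have : star (Complex.I) = -Complex.I := by
      rw [← starRingEnd_apply, Complex.conj_I]
    rw [this, neg_smul, ← smul_neg, neg_sub]
  have hdecomp : b = (2⁻¹ : ℂ) • (P + Complex.I • Q) := by
    rw [hP, hQ, smul_smul, Complex.I_mul_I, neg_one_smul]
    module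
  have h1 := centrality_sa hKinv hx hω hPsa
  have h2 := centrality_sa hKinv hx hω hQsa
  have e1 : ω (x * b)
      = (2⁻¹:ℂ) * (ω (x * P) + Complex.I * ω (x * Q)) := by
    conv_lhs => rw [hdecomp]
    rw [mul_smul_comm, map_smul, smul_eq_mul, mul_add, map_add, mul_smul_comm, map_smul,
      smul_eq_mul]
  have e2 : ω (b * x)
      = (2⁻¹:ℂ) * (ω (P * x) + Complex.I * ω (Q * x)) := by
    conv_lhs => rw [hdecomp]
    rw [smul_mul_assoc, map_smul, smul_eq_mul, add_mul, map_add, smul_mul_assoc, map_smul,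
      smul_eq_mul]
  rw [e1, h1, h2, e2]

/-- Square-vanishing: for a self-adjoint element of `K^⊥` and `ω ∈ K`, `ω (x * x) = 0`. -/
lemma sq_vanish
    {K : Set (WeakDual ℂ A)}
    (hKsub : ∀ ω ∈ K, ω ∈ Set.extremePoints ℝ
      {σ : WeakDual ℂ A | (∀ a : A, 0 ≤ σ (star a * a)) ∧ σ 1 = 1})
    (hKinv : ∀ ω ∈ K, ∀ u ∈ unitary A, ∀ ω' : WeakDual ℂ A,
      (∀ a : A, ω' a = ω (star u * a * u)) → ω' ∈ K)
    {x : A} (hx : ∀ ϖ ∈ K, ϖ x = 0) (hxsa : IsSelfAdjoint x)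
    {ω : WeakDual ℂ A} (hω : ω ∈ K) :
    ω (x * x) = 0 := by
  obtain ⟨hωpos, hω1⟩ := (hKsub ω hω).1
  have hcent := centrality hKinv hx hω
  have hωx : ω x = 0 := hx ω hω
  -- the two conjugation functionals
  have main : ∀ c : A, IsSelfAdjoint c → (∀ b : A, ω (c * b) = ω (b * c)) →
      ∀ y : A, ω (c * y * c) = ω (c * c) * ω y := by
    intro c hcsa hccent y
    set φ : WeakDual ℂ A :=
      ContinuousLinearMap.comp (show A →L[ℂ] ℂ from ω) (sandwich c c) with hφ
    have hφapp : ∀ z : A, φ z = ω (c * z * c) := by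
      intro z
      have : φ z = ω (sandwich c c z) := rfl
      rw [this, sandwich_apply]
    have hφpos : ∀ a : A, 0 ≤ φ (star a * a) := by
      intro a
      rw [hφapp]
      have e : c * (star a * a) * c = star (a * c) * (a * c) := by
        rw [star_mul, hcsa.star_eq]
        noncomm_ring
      rw [e]
      exact hωpos (a * c)
    have hφval : ∀ a : A, φ (star a * a) = ω (star a * a * c ^ 2) := by
      intro a
      rw [hφapp]
      have e1 : c * (star a * a) * c = c * (star a * a * c) := by noncomm_ring
      rw [e1, hccent (star a * a * c)]
      congr 1
      noncomm_ring
    have hφdom : ∀ a : A, (φ (star a * a)).re ≤ (‖c‖ ^ 2 + 1) * (ω (star a * a)).re := by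
      intro a
      rw [hφval]
      have h1 := domination (σ := ω) hωpos hω1 hcsa hccent a
      have h2 := (pos_re_im (σ := ω) hωpos a).1
      nlinarith
    have hC : (0:ℝ) < ‖c‖ ^ 2 + 1 := by positivity
    have hpur := purity (hKsub ω hω) φ hφpos hC hφdom
    have := hpur y
    rw [hφapp, hφapp] at this
    rw [this]
    congr 1
    rw [mul_one]
  -- apply with c = x + 1 and c = x - 1
  have hsa_plus : IsSelfAdjoint (x + 1) := by
    rw [IsSelfAdjoint, star_add, hxsa.star_eq, star_one]
  have hsa_minus : IsSelfAdjoint (x - 1) := by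
    rw [IsSelfAdjoint, star_sub, hxsa.star_eq, star_one]
  have hcent_plus : ∀ b : A, ω ((x + 1) * b) = ω (b * (x + 1)) := by
    intro b
    rw [add_mul, mul_add, one_mul, mul_one, map_add, map_add, hcent b]
  have hcent_minus : ∀ b : A, ω ((x - 1) * b) = ω (b * (x - 1)) := by
    intro b
    rw [sub_mul, mul_sub, one_mul, mul_one, map_sub, map_sub, hcent b]
  have hplus := main (x + 1) hsa_plus hcent_plus x
  have hminus := main (x - 1) hsa_minus hcent_minus x
  rw [hωx, mul_zero] at hplus hminus
  have hdiff : ω ((x + 1) * x * (x + 1)) - ω ((x - 1) * x * (x - 1))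
      = ω (x * x) + ω (x * x) + ω (x * x) + ω (x * x) := by
    rw [← map_sub]
    have e : (x + 1) * x * (x + 1) - (x - 1) * x * (x - 1)
        = x * x + x * x + x * x + x * x := by noncomm_ring
    rw [e, map_add, map_add, map_add]
  rw [hplus, hminus] at hdiff
  have : ω (x * x) + ω (x * x) + ω (x * x) + ω (x * x) = 0 := by rw [← hdiff]; ring
  linear_combination this / 4

/-- If `ω ∈ K` is a state, `z` is self-adjoint with `ω (z * z) = 0`, then
`ω (z * b) = 0` and `ω (b * z) = 0` for every `b`. -/
lemma mul_vanish_of_sq {ω : WeakDual ℂ A}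
    (hωpos : ∀ a : A, 0 ≤ ω (star a * a))
    {z : A} (hzsa : IsSelfAdjoint z) (hzz : ω (z * z) = 0) (b : A) :
    ω (z * b) = 0 ∧ ω (b * z) = 0 := by
  have hzz' : (ω (star z * z)).re = 0 := by rw [hzsa.star_eq, hzz]; simp
  constructor
  · have h := cs (σ := ω) hωpos z b
    rw [hzz', zero_mul] at h
    have : ‖ω (star z * b)‖ = 0 := by
      nlinarith [norm_nonneg (ω (star z * b))]
    rw [norm_eq_zero] at this
    rwa [hzsa.star_eq] at this
  · have h := cs (σ := ω) hωpos (star b) z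
    rw [star_star] at h
    have hre : (ω (star z * z)).re = 0 := hzz'
    rw [hre, mul_zero] at h
    have : ‖ω (b * z)‖ = 0 := by
      nlinarith [norm_nonneg (ω (b * z))]
    rwa [norm_eq_zero] at this

end Stmt13Aux

open Stmt13Aux in
/-- If `K` is a set of pure states of a unital C*-algebra `A`, closed in the weak-* topology
within the pure state space and invariant under the adjoint action `ω ↦ ω(u* · u)` of the
unitary group, then `K^⊥ = {a : ω(a) = 0 ∀ ω ∈ K}` is a closed two-sided ideal of `A`. -/
theorem stmt13 (A : Type*) [CStarAlgebra A]
    (pureStates : Set (WeakDual ℂ A))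
    (hps : pureStates = Set.extremePoints ℝ
      {σ : WeakDual ℂ A | (∀ a : A, 0 ≤ σ (star a * a)) ∧ σ 1 = 1})
    (K : Set (WeakDual ℂ A)) (hKsub : K ⊆ pureStates)
    (hKclosed : ∀ ρ ∈ pureStates, ρ ∈ closure K → ρ ∈ K)
    (hKinv : ∀ ω ∈ K, ∀ u ∈ unitary A, ∀ ω' : WeakDual ℂ A,
      (∀ a : A, ω' a = ω (star u * a * u)) → ω' ∈ K) :
    IsClosed {a : A | ∀ ω ∈ K, ω a = 0} ∧
      ∃ I : TwoSidedIdeal A, (I : Set A) = {a : A | ∀ ω ∈ K, ω a = 0} := by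
  have hext : ∀ ω ∈ K, ω ∈ Set.extremePoints ℝ
      {σ : WeakDual ℂ A | (∀ a : A, 0 ≤ σ (star a * a)) ∧ σ 1 = 1} := by
    intro ω hω
    have h := hKsub hω
    rwa [hps] at h
  have hstate : ∀ ω ∈ K, (∀ a : A, 0 ≤ ω (star a * a)) ∧ ω 1 = 1 :=
    fun ω hω => (hext ω hω).1
  constructor
  · -- closedness
    have heq : {a : A | ∀ ω ∈ K, ω a = 0} = ⋂ ω ∈ K, ((fun a : A => ω a) ⁻¹' {0}) := by
      ext a
      simp
    rw [heq]
    refine isClosed_iInter fun ω => isClosed_iInter fun _ => ?_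
    exact IsClosed.preimage
      (show Continuous fun a : A => ω a from (show A →L[ℂ] ℂ from ω).continuous)
      isClosed_singleton
  · -- ideal
    have hstar : ∀ a : A, (∀ ω ∈ K, ω a = 0) → ∀ ω ∈ K, ω (star a) = 0 := by
      intro a ha ω hω
      have h := herm (σ := ω) (hstate ω hω).1 1 a
      simp only [mul_one, star_one, one_mul] at h
      rw [h, ha ω hω, map_zero]
    have hmul : ∀ a : A, (∀ ω ∈ K, ω a = 0) → ∀ b : A,
        (∀ ω ∈ K, ω (a * b) = 0) ∧ (∀ ω ∈ K, ω (b * a) = 0) := by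
      intro a ha b
      set P : A := a + star a with hP
      set Q : A := Complex.I • (star a - a) with hQ
      have hPmem : ∀ ω ∈ K, ω P = 0 := by
        intro ω hω
        rw [hP, map_add, ha ω hω, hstar a ha ω hω, add_zero]
      have hQmem : ∀ ω ∈ K, ω Q = 0 := by
        intro ω hω
        rw [hQ, map_smul, map_sub, ha ω hω, hstar a ha ω hω]
        simp
      have hPsa : IsSelfAdjoint P := by
        rw [hP, IsSelfAdjoint, star_add, star_star, add_comm]
      have hQsa : IsSelfAdjoint Q := by
        rw [hQ, IsSelfAdjoint, star_smul, star_sub, star_star]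
        have : star (Complex.I) = -Complex.I := by
          rw [← starRingEnd_apply, Complex.conj_I]
        rw [this, neg_smul, ← smul_neg, neg_sub]
      have hdecomp : a = (2⁻¹ : ℂ) • (P + Complex.I • Q) := by
        rw [hP, hQ, smul_smul, Complex.I_mul_I, neg_one_smul]
        module
      constructor
      · intro ω hω
        have hωpos := (hstate ω hω).1
        have hPzz := sq_vanish hext hKinv hPmem hPsa hω
        have hQzz := sq_vanish hext hKinv hQmem hQsa hω
        have h1 := (mul_vanish_of_sq hωpos hPsa hPzz b).1
        have h2 := (mul_vanish_of_sq hωpos hQsa hQzz b).1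
        have e : a * b = (2⁻¹ : ℂ) • (P * b + Complex.I • (Q * b)) := by
          conv_lhs => rw [hdecomp]
          rw [smul_mul_assoc, add_mul, smul_mul_assoc]
        rw [e, map_smul, map_add, map_smul, h1, h2]
        simp
      · intro ω hω
        have hωpos := (hstate ω hω).1
        have hPzz := sq_vanish hext hKinv hPmem hPsa hω
        have hQzz := sq_vanish hext hKinv hQmem hQsa hω
        have h1 := (mul_vanish_of_sq hωpos hPsa hPzz b).2
        have h2 := (mul_vanish_of_sq hωpos hQsa hQzz b).2
        have e : b * a = (2⁻¹ : ℂ) • (b * P + Complex.I • (b * Q)) := by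
          conv_lhs => rw [hdecomp]
          rw [mul_smul_comm, mul_add, mul_smul_comm]
        rw [e, map_smul, map_add, map_smul, h1, h2]
        simp
    refine ⟨TwoSidedIdeal.mk' {a : A | ∀ ω ∈ K, ω a = 0}
      (fun ω _ => map_zero ω)
      (fun {x y} hx hy ω hω => by rw [map_add, hx ω hω, hy ω hω, add_zero])
      (fun {x} hx ω hω => by rw [map_neg, hx ω hω, neg_zero])
      (fun {x y} hy => (hmul y hy x).2)
      (fun {x y} hx => (hmul x hx y).1), ?_⟩
    exact TwoSidedIdeal.coe_mk' _ _ _ _ _ _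
end
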